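/- arXiv:2401.12984 — 2 statements merged into one kernel-verified Lean document; each statement's English description precedes it below -/
import Mathlib

section
/- Let $n \ge 7$ be an integer with $n \equiv 0 \pmod 2$ and let $G$ be a simple graph on $n$ vertices. If the signless Laplacian spectral radius of $G$ is at least the signless Laplacian spectral radius of the graph $K_2 \vee (K_1 \cup K_{n-3})$, then either $G$ is isomorphic to $K_2 \vee (K_1 \cup K_{n-3})$, or for every edge $e$ of $G$ there exists a perfect matching of $G$ containing $e$. -/
open Classical in
/-- The adjacency matrix of a simple graph, with real entries. -/
noncomputable def adjMat {V : Type} [Fintype V] (G : SimpleGraph V) : Matrix V V ℝ :=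
  fun i j => if G.Adj i j then 1 else 0

/-- The largest real eigenvalue of a real matrix. -/
noncomputable def maxEig {V : Type} [Fintype V] (M : Matrix V V ℝ) : ℝ :=
  sSup {t : ℝ | ∃ x : V → ℝ, x ≠ 0 ∧ M.mulVec x = t • x}

/-- The spectral radius (largest adjacency eigenvalue) of a graph. -/
noncomputable def specRad {V : Type} [Fintype V] (G : SimpleGraph V) : ℝ :=
  maxEig (adjMat G)

/-- The signless Laplacian matrix `Q(G) = D(G) + A(G)`. -/
noncomputable def qMat {V : Type} [Fintype V] [DecidableEq V] (G : SimpleGraph V) :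
    Matrix V V ℝ :=
  Matrix.diagonal (fun v => ∑ w, adjMat G v w) + adjMat G

/-- The signless Laplacian spectral radius of a graph. -/
noncomputable def qRad {V : Type} [Fintype V] [DecidableEq V] (G : SimpleGraph V) : ℝ :=
  maxEig (qMat G)

/-- The graph `K_s ∨ (a K_1 ∪ K_{n-s-a})` on vertex set `Fin n`:
the first `s` vertices form a clique joined to everything, the next `a` vertices are
independent, and the last `n - s - a` vertices form a clique. -/
def modelA (n s a : ℕ) : SimpleGraph (Fin n) where
  Adj i j := i ≠ j ∧ ((i : ℕ) < s ∨ (j : ℕ) < s ∨ (s + a ≤ (i : ℕ) ∧ s + a ≤ (j : ℕ)))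
  symm := ⟨by rintro i j ⟨h1, h2⟩; exact ⟨h1.symm, by tauto⟩⟩
  loopless := ⟨fun i h => h.1 rfl⟩

/-- The graph `s K_1 ∨ (a K_1 ∪ K_{n-s-a})` on vertex set `Fin n`:
the first `s` vertices are independent but joined to everything else, the next `a`
vertices are independent, and the last `n - s - a` vertices form a clique. -/
def modelB (n s a : ℕ) : SimpleGraph (Fin n) where
  Adj i j := i ≠ j ∧ (((i : ℕ) < s ∧ ¬ (j : ℕ) < s) ∨ ((j : ℕ) < s ∧ ¬ (i : ℕ) < s) ∨
    (s + a ≤ (i : ℕ) ∧ s + a ≤ (j : ℕ)))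
  symm := ⟨by rintro i j ⟨h1, h2⟩; exact ⟨h1.symm, by tauto⟩⟩
  loopless := ⟨fun i h => h.1 rfl⟩

/-- `M` is a matching of `G`: a set of pairwise disjoint edges of `G`. -/
def IsMatchingIn {V : Type} (G : SimpleGraph V) (M : Finset (Sym2 V)) : Prop :=
  (↑M : Set (Sym2 V)) ⊆ G.edgeSet ∧
    ∀ e ∈ M, ∀ f ∈ M, e ≠ f → ∀ v : V, ¬(v ∈ e ∧ v ∈ f)

/-- `H` is an `S(k)`-factor of `G`: a spanning subgraph of `G` each of whose connected
components is isomorphic to a star `K_{1,m}` with `1 ≤ m ≤ k`. -/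
def IsSkFactor {V : Type} [Fintype V] (G H : SimpleGraph V) (k : ℕ) : Prop :=
  H ≤ G ∧ ∀ c : H.ConnectedComponent, ∃ m : ℕ, 1 ≤ m ∧ m ≤ k ∧
    Nonempty ((H.induce c.supp) ≃g completeBipartiteGraph Unit (Fin m))

open Finset

variable {n : ℕ}

open Classical in
/-- ordered "bad" (non-adjacent, distinct) pairs within `s` -/
noncomputable def bp (G : SimpleGraph (Fin n)) (s : Finset (Fin n)) : Finset (Fin n × Fin n) :=
  (s ×ˢ s).filter (fun p => p.1 ≠ p.2 ∧ ¬ G.Adj p.1 p.2)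

open Classical in
/-- bad neighbours of `v` within `s` -/
noncomputable def bd (G : SimpleGraph (Fin n)) (s : Finset (Fin n)) (v : Fin n) : Finset (Fin n) :=
  s.filter (fun z => z ≠ v ∧ ¬ G.Adj v z)

noncomputable def e2 (G : SimpleGraph (Fin n)) (s : Finset (Fin n)) : ℕ := (bp G s).card

noncomputable def dN (G : SimpleGraph (Fin n)) (s : Finset (Fin n)) (v : Fin n) : ℕ :=
  (bd G s v).card

lemma mem_bp {G : SimpleGraph (Fin n)} {s : Finset (Fin n)} {p : Fin n × Fin n} :
    p ∈ bp G s ↔ p.1 ∈ s ∧ p.2 ∈ s ∧ p.1 ≠ p.2 ∧ ¬ G.Adj p.1 p.2 := by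
  classical
  simp [bp, Finset.mem_filter, Finset.mem_product]
  tauto

lemma mem_bd {G : SimpleGraph (Fin n)} {s : Finset (Fin n)} {v z : Fin n} :
    z ∈ bd G s v ↔ z ∈ s ∧ z ≠ v ∧ ¬ G.Adj v z := by
  classical simp [bd]

lemma bp_mono {G : SimpleGraph (Fin n)} {s t : Finset (Fin n)} (h : s ⊆ t) :
    bp G s ⊆ bp G t := by
  intro p hp; rw [mem_bp] at *; exact ⟨h hp.1, h hp.2.1, hp.2.2⟩

lemma e2_mono {G : SimpleGraph (Fin n)} {s t : Finset (Fin n)} (h : s ⊆ t) :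
    e2 G s ≤ e2 G t := Finset.card_le_card (bp_mono h)

lemma bd_mono {G : SimpleGraph (Fin n)} {s t : Finset (Fin n)} (h : s ⊆ t) (v : Fin n) :
    bd G s v ⊆ bd G t v := by
  intro z hz; rw [mem_bd] at *; exact ⟨h hz.1, hz.2⟩

lemma dN_mono {G : SimpleGraph (Fin n)} {s t : Finset (Fin n)} (h : s ⊆ t) (v : Fin n) :
    dN G s v ≤ dN G t v := Finset.card_le_card (bd_mono h v)

lemma e2_eq_sum {G : SimpleGraph (Fin n)} {s : Finset (Fin n)} :
    e2 G s = ∑ v ∈ s, dN G s v := by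
  classical
  rw [e2, Finset.card_eq_sum_card_fiberwise (f := Prod.fst) (t := s)
    (fun p hp => (mem_bp.1 hp).1)]
  refine Finset.sum_congr rfl (fun v hv => ?_)
  rw [dN]
  apply Finset.card_bij (fun p _ => p.2)
  · intro p hp
    simp only [Finset.mem_filter] at hp
    obtain ⟨hp1, hp2⟩ := hp
    rw [mem_bp] at hp1
    rw [mem_bd]
    refine ⟨hp1.2.1, ?_, ?_⟩
    · subst hp2; exact hp1.2.2.1.symm
    · subst hp2; exact fun h => hp1.2.2.2 h
  · intro p hp q hq hpq
    simp only [Finset.mem_filter] at hp hq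
    exact Prod.ext (hp.2.trans hq.2.symm) hpq
  · intro z hz
    rw [mem_bd] at hz
    exact ⟨(v, z), by simp [Finset.mem_filter, mem_bp, hv, hz.1, hz.2.1.symm, hz.2.2], rfl⟩

/-- the ordered bad pairs at `v` -/
noncomputable def pva (G : SimpleGraph (Fin n)) (s : Finset (Fin n)) (v : Fin n) :
    Finset (Fin n × Fin n) := ({v} ×ˢ bd G s v) ∪ (bd G s v ×ˢ {v})

lemma mem_pva {G : SimpleGraph (Fin n)} {s : Finset (Fin n)} {v : Fin n} {p : Fin n × Fin n} :
    p ∈ pva G s v ↔ (p.1 = v ∧ p.2 ∈ bd G s v) ∨ (p.1 ∈ bd G s v ∧ p.2 = v) := by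
  constructor
  · intro h
    rcases Finset.mem_union.1 h with h | h
    · left
      have := Finset.mem_product.1 h
      exact ⟨Finset.mem_singleton.1 this.1, this.2⟩
    · right
      have := Finset.mem_product.1 h
      exact ⟨this.1, Finset.mem_singleton.1 this.2⟩
  · rintro (⟨h1, h2⟩ | ⟨h1, h2⟩)
    · exact Finset.mem_union_left _ (Finset.mem_product.2 ⟨Finset.mem_singleton.2 h1, h2⟩)
    · exact Finset.mem_union_right _ (Finset.mem_product.2 ⟨h1, Finset.mem_singleton.2 h2⟩)

lemma pva_card {G : SimpleGraph (Fin n)} {s : Finset (Fin n)} {v : Fin n} :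
    (pva G s v).card = 2 * dN G s v := by
  rw [pva, Finset.card_union_of_disjoint, Finset.card_product, Finset.card_product]
  · simp [dN]; ring
  · rw [Finset.disjoint_left]
    rintro ⟨a, b⟩ hab hab'
    simp only [Finset.mem_product, Finset.mem_singleton] at hab hab'
    have := (mem_bd.1 hab'.1).2.1
    exact this hab.1

lemma pva_subset {G : SimpleGraph (Fin n)} {s : Finset (Fin n)} {v : Fin n} (hv : v ∈ s) :
    pva G s v ⊆ bp G s := by
  rintro ⟨a, b⟩ hab
  rw [mem_pva] at hab
  rw [mem_bp]
  rcases hab with ⟨h1, h2⟩ | ⟨h1, h2⟩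
  · rw [mem_bd] at h2
    simp only at h1 h2 ⊢
    subst h1
    exact ⟨hv, h2.1, Ne.symm h2.2.1, h2.2.2⟩
  · rw [mem_bd] at h1
    simp only at h1 h2 ⊢
    subst h2
    exact ⟨h1.1, hv, h1.2.1, fun h => h1.2.2 h.symm⟩

/-- c0 -/
lemma two_dN_le_e2 {G : SimpleGraph (Fin n)} {s : Finset (Fin n)} {v : Fin n} (hv : v ∈ s) :
    2 * dN G s v ≤ e2 G s := by
  rw [← pva_card]; exact Finset.card_le_card (pva_subset hv)

lemma pva_coord {G : SimpleGraph (Fin n)} {s : Finset (Fin n)} {v : Fin n} {p : Fin n × Fin n}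
    (hp : p ∈ pva G s v) : p.1 = v ∨ p.2 = v := by
  rcases mem_pva.1 hp with h | h
  · exact Or.inl h.1
  · exact Or.inr h.2

lemma pva_disj {G : SimpleGraph (Fin n)} {s t : Finset (Fin n)} {u w : Fin n}
    (huw : u ≠ w) (hadj : G.Adj u w) : Disjoint (pva G s u) (pva G t w) := by
  rw [Finset.disjoint_left]
  rintro ⟨a, b⟩ h1 h2
  rcases mem_pva.1 h1 with ⟨e1, m1⟩ | ⟨m1, e1⟩ <;>
    rcases mem_pva.1 h2 with ⟨e2, m2⟩ | ⟨m2, e2⟩ <;> simp only at e1 e2 m1 m2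
  · exact huw (e1 ▸ e2 ▸ rfl)
  · subst e1; subst e2; exact (mem_bd.1 m1).2.2 hadj
  · subst e1; subst e2; exact (mem_bd.1 m2).2.2 hadj.symm
  · exact huw (e1 ▸ e2 ▸ rfl)

lemma bp_coord {G : SimpleGraph (Fin n)} {s : Finset (Fin n)} {p : Fin n × Fin n}
    (hp : p ∈ bp G s) : p.1 ∈ s ∧ p.2 ∈ s := ⟨(mem_bp.1 hp).1, (mem_bp.1 hp).2.1⟩

lemma bp_pva_disj {G : SimpleGraph (Fin n)} {s t : Finset (Fin n)} {u : Fin n}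
    (hu : u ∉ s) : Disjoint (bp G s) (pva G t u) := by
  rw [Finset.disjoint_left]
  intro p h1 h2
  rcases pva_coord h2 with h | h
  · exact hu (h ▸ (bp_coord h1).1)
  · exact hu (h ▸ (bp_coord h1).2)

/-- c1 : removing a matched good pair removes at least `2 dN u + 2 dN w` bad pairs. -/
lemma e2_erase_le {G : SimpleGraph (Fin n)} {s : Finset (Fin n)} {u w : Fin n}
    (hu : u ∈ s) (hw : w ∈ s) (huw : u ≠ w) (hadj : G.Adj u w) :
    e2 G ((s.erase u).erase w) + 2 * dN G s u + 2 * dN G s w ≤ e2 G s := by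
  classical
  have h1 : Disjoint (bp G ((s.erase u).erase w)) (pva G s u) :=
    bp_pva_disj (fun h => (Finset.mem_erase.1 (Finset.mem_erase.1 h).2).1 rfl)
  have h2 : Disjoint (bp G ((s.erase u).erase w)) (pva G s w) :=
    bp_pva_disj (fun h => (Finset.mem_erase.1 h).1 rfl)
  have h3 : Disjoint (pva G s u) (pva G s w) := pva_disj huw hadj
  have hsub : (bp G ((s.erase u).erase w)) ∪ (pva G s u) ∪ (pva G s w) ⊆ bp G s := by
    refine Finset.union_subset (Finset.union_subset ?_ ?_) ?_
    · exact bp_mono (fun z hz => Finset.mem_of_mem_erase (Finset.mem_of_mem_erase hz))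
    · exact pva_subset hu
    · exact pva_subset hw
  have hcard := Finset.card_le_card hsub
  rw [Finset.card_union_of_disjoint, Finset.card_union_of_disjoint h1] at hcard
  · rw [pva_card, pva_card] at hcard
    exact hcard
  · rw [Finset.disjoint_union_left]
    exact ⟨h2, h3⟩

/-- c3 -/
lemma e2_lower {G : SimpleGraph (Fin n)} {s s' : Finset (Fin n)} {u z : Fin n}
    (hu : u ∈ s) (hz : z ∈ s') (hsub : s' ⊆ s.erase u) :
    2 * dN G s u + 2 * dN G s' z ≤ e2 G s := by
  classical
  have hdisj : Disjoint (pva G s u) (pva G s' z) := by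
    rw [Finset.disjoint_right]
    intro p h2 h1
    have hc : p.1 ∈ s' ∨ p.2 ∈ s' := by
      rcases mem_pva.1 h2 with ⟨e, m⟩ | ⟨m, e⟩
      · exact Or.inl (e ▸ hz)
      · exact Or.inl (mem_bd.1 m).1
    have hne : p.1 ≠ u ∧ p.2 ≠ u := by
      constructor
      · rcases mem_pva.1 h2 with ⟨e, m⟩ | ⟨m, e⟩
        · exact e ▸ (Finset.mem_erase.1 (hsub hz)).1
        · exact (Finset.mem_erase.1 (hsub (mem_bd.1 m).1)).1
      · rcases mem_pva.1 h2 with ⟨e, m⟩ | ⟨m, e⟩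
        · exact (Finset.mem_erase.1 (hsub (mem_bd.1 m).1)).1
        · exact e ▸ (Finset.mem_erase.1 (hsub hz)).1
    rcases pva_coord h1 with h | h
    · exact hne.1 h
    · exact hne.2 h
  have hsub2 : (pva G s u) ∪ (pva G s' z) ⊆ bp G s := by
    refine Finset.union_subset (pva_subset hu) ?_
    refine (pva_subset hz).trans (bp_mono ?_)
    exact hsub.trans (Finset.erase_subset _ _)
  have := Finset.card_le_card hsub2
  rw [Finset.card_union_of_disjoint hdisj, pva_card, pva_card] at this
  exact this

open Classical in
/-- good (adjacent) neighbours of `u` within `s` -/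
noncomputable def Au (G : SimpleGraph (Fin n)) (s : Finset (Fin n)) (u : Fin n) :
    Finset (Fin n) := s.filter (fun z => z ≠ u ∧ G.Adj u z)

lemma mem_Au {G : SimpleGraph (Fin n)} {s : Finset (Fin n)} {u z : Fin n} :
    z ∈ Au G s u ↔ z ∈ s ∧ z ≠ u ∧ G.Adj u z := by
  classical simp [Au]

lemma erase_eq_bd_union_Au {G : SimpleGraph (Fin n)} {s : Finset (Fin n)} {u : Fin n} :
    s.erase u = bd G s u ∪ Au G s u := by
  ext z
  rw [Finset.mem_erase, Finset.mem_union, mem_bd, mem_Au]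
  constructor
  · rintro ⟨h1, h2⟩
    by_cases h : G.Adj u z
    · exact Or.inr ⟨h2, h1, h⟩
    · exact Or.inl ⟨h2, h1, h⟩
  · rintro (⟨h1, h2, h3⟩ | ⟨h1, h2, h3⟩) <;> exact ⟨h2, h1⟩

lemma bd_Au_disj {G : SimpleGraph (Fin n)} {s : Finset (Fin n)} {u : Fin n} :
    Disjoint (bd G s u) (Au G s u) := by
  rw [Finset.disjoint_left]
  intro z h1 h2
  exact (mem_bd.1 h1).2.2 (mem_Au.1 h2).2.2

lemma card_erase_split {G : SimpleGraph (Fin n)} {s : Finset (Fin n)} {u : Fin n} (hu : u ∈ s) :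
    s.card = 1 + dN G s u + (Au G s u).card := by
  have : (s.erase u).card = dN G s u + (Au G s u).card := by
    rw [erase_eq_bd_union_Au (G := G), Finset.card_union_of_disjoint bd_Au_disj]; rfl
  rw [Finset.card_erase_of_mem hu] at this
  have h2 : 1 ≤ s.card := Finset.card_pos.2 ⟨u, hu⟩
  omega

/-- c2' -/
lemma e2_le_split {G : SimpleGraph (Fin n)} {s : Finset (Fin n)} {u w : Fin n}
    (hu : u ∈ s) (hmax : ∀ v ∈ s, dN G s v ≤ dN G s u)
    (hw : w ∈ Au G s u) (hmaxA : ∀ v ∈ Au G s u, dN G s v ≤ dN G s w) :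
    e2 G s ≤ dN G s u + dN G s u * dN G s u + (Au G s u).card * dN G s w := by
  rw [e2_eq_sum, ← Finset.add_sum_erase _ _ hu, erase_eq_bd_union_Au (G := G),
    Finset.sum_union bd_Au_disj]
  have b1 : ∑ v ∈ bd G s u, dN G s v ≤ dN G s u * dN G s u := by
    calc ∑ v ∈ bd G s u, dN G s v ≤ (bd G s u).card * dN G s u := by
          rw [← smul_eq_mul]
          exact Finset.sum_le_card_nsmul _ _ _ (fun v hv => hmax v (mem_bd.1 hv).1)
      _ = dN G s u * dN G s u := rfl
  have b2 : ∑ v ∈ Au G s u, dN G s v ≤ (Au G s u).card * dN G s w := by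
    rw [← smul_eq_mul]
    exact Finset.sum_le_card_nsmul _ _ _ hmaxA
  omega

/-- crude bound via max degree -/
lemma e2_le_card_mul {G : SimpleGraph (Fin n)} {s : Finset (Fin n)} {u : Fin n}
    (hmax : ∀ v ∈ s, dN G s v ≤ dN G s u) :
    e2 G s ≤ s.card * dN G s u := by
  rw [e2_eq_sum, ← smul_eq_mul]
  exact Finset.sum_le_card_nsmul _ _ _ hmax

lemma dN_le_card {G : SimpleGraph (Fin n)} {s : Finset (Fin n)} {u : Fin n} (hu : u ∈ s) :
    dN G s u + 1 ≤ s.card := by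
  have : bd G s u ⊆ s.erase u := by
    intro z hz; exact Finset.mem_erase.2 ⟨(mem_bd.1 hz).2.1, (mem_bd.1 hz).1⟩
  have := Finset.card_le_card this
  rw [Finset.card_erase_of_mem hu] at this
  have h2 : 1 ≤ s.card := Finset.card_pos.2 ⟨u, hu⟩
  unfold dN
  omega

lemma matching_exists (G : SimpleGraph (Fin n)) :
    ∀ k, ∀ s : Finset (Fin n), s.card = k → k % 2 = 0 → 4 ≤ k →
    (k = 4 → e2 G s ≤ 5) →
    (6 ≤ k → e2 G s + 1 ≤ 2 * k ∧ ∀ v ∈ s, dN G s v + 2 ≤ k) →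
    ∃ M : Finset (Sym2 (Fin n)),
      (∀ e ∈ M, ∃ x y : Fin n, x ∈ s ∧ y ∈ s ∧ G.Adj x y ∧ e = s(x, y)) ∧
      (∀ e ∈ M, ∀ f ∈ M, e ≠ f → ∀ v : Fin n, ¬(v ∈ e ∧ v ∈ f)) ∧
      (∀ v ∈ s, ∃ e ∈ M, v ∈ e) ∧
      (∀ e ∈ M, ∀ v : Fin n, v ∈ e → v ∈ s) := by
  intro k
  induction k using Nat.strong_induction_on with
  | _ k ih =>
  intro s hcard hpar hk4 hc4 hc6
  -- choose u of maximal bad-degree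
  have hsne : s.Nonempty := Finset.card_pos.1 (by omega)
  obtain ⟨u, hu, hmax⟩ := Finset.exists_max_image s (dN G s) hsne
  -- u has a good neighbour
  have hAune : (Au G s u).Nonempty := by
    rw [← Finset.card_pos]
    have hsplit := card_erase_split (G := G) hu
    have hdNu : dN G s u + 2 ≤ k := by
      by_cases h6 : 6 ≤ k
      · exact (hc6 h6).2 u hu
      · have hk : k = 4 := by omega
        have := two_dN_le_e2 (G := G) hu
        have := hc4 hk
        omega
    omega
  by_cases hks : k = 4
  -- ============ base case k = 4 ============
  · obtain ⟨w, hwAu⟩ := hAune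
    have hw : w ∈ s := (mem_Au.1 hwAu).1
    have hwu : w ≠ u := (mem_Au.1 hwAu).2.1
    have hadj : G.Adj u w := (mem_Au.1 hwAu).2.2
    have he2 : e2 G s ≤ 5 := hc4 hks
    have hdNu2 : dN G s u ≤ 2 := by have := two_dN_le_e2 (G := G) hu; omega
    set s' := (s.erase u).erase w with hs'
    have hwe : w ∈ s.erase u := Finset.mem_erase.2 ⟨hwu, hw⟩
    have hs'card : s'.card = 2 := by
      rw [hs', Finset.card_erase_of_mem hwe, Finset.card_erase_of_mem hu, hcard, hks]
    obtain ⟨x, y, hxy, hs'eq⟩ := Finset.card_eq_two.1 hs'card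
    have hxs' : x ∈ s' := by rw [hs'eq]; simp
    have hys' : y ∈ s' := by rw [hs'eq]; simp
    have hsub' : s' ⊆ s.erase u := Finset.erase_subset _ _
    have hs's : s' ⊆ s := hsub'.trans (Finset.erase_subset _ _)
    have hxs : x ∈ s := hs's hxs'
    have hys : y ∈ s := hs's hys'
    have hxu : x ≠ u := (Finset.mem_erase.1 (hsub' hxs')).1
    have hyu : y ≠ u := (Finset.mem_erase.1 (hsub' hys')).1
    have hxw : x ≠ w := (Finset.mem_erase.1 hxs').1
    have hyw : y ≠ w := (Finset.mem_erase.1 hys').1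
    -- the remaining two vertices are adjacent
    have hadj2 : G.Adj x y := by
      by_contra hnadj
      have hybdx : y ∈ bd G s x := mem_bd.2 ⟨hys, hxy.symm, fun h => hnadj h⟩
      interval_cases hdn : dN G s u
      · -- dN u = 0 : but x has a bad neighbour
        have : 1 ≤ dN G s x := Finset.card_pos.2 ⟨y, hybdx⟩
        have := hmax x hxs
        omega
      · -- dN u = 1 : u's bad partner is x or y, which then has bad degree ≥ 2
        have hbne : (bd G s u).Nonempty := by rw [← Finset.card_pos]; unfold dN at hdn; omega
        obtain ⟨z, hz⟩ := hbne
        have hzs := (mem_bd.1 hz).1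
        have hzu := (mem_bd.1 hz).2.1
        have hznadj := (mem_bd.1 hz).2.2
        have hzw : z ≠ w := fun h => hznadj (h ▸ hadj)
        have hzs' : z ∈ s' := Finset.mem_erase.2 ⟨hzw, Finset.mem_erase.2 ⟨hzu, hzs⟩⟩
        have hzxy : z = x ∨ z = y := by
          rw [hs'eq] at hzs'; simpa using hzs'
        rcases hzxy with hzx | hzy
        · subst hzx
          have h2 : ({u, y} : Finset (Fin n)) ⊆ bd G s z := by
            intro t ht
            simp only [Finset.mem_insert, Finset.mem_singleton] at ht
            rcases ht with rfl | rfl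
            · exact mem_bd.2 ⟨hu, Ne.symm hzu, fun h => hznadj h.symm⟩
            · exact mem_bd.2 ⟨hys, Ne.symm hxy, fun h => hnadj h⟩
          have h3 : 2 ≤ dN G s z := by
            have hc := Finset.card_le_card h2
            rwa [Finset.card_insert_of_notMem (by
              simp only [Finset.mem_singleton]; exact fun h => hyu h.symm),
              Finset.card_singleton] at hc
          have := hmax z hzs
          omega
        · subst hzy
          have h2 : ({u, x} : Finset (Fin n)) ⊆ bd G s z := by
            intro t ht
            simp only [Finset.mem_insert, Finset.mem_singleton] at ht
            rcases ht with rfl | rfl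
            · exact mem_bd.2 ⟨hu, Ne.symm hzu, fun h => hznadj h.symm⟩
            · exact mem_bd.2 ⟨hxs, hxy, fun h => hnadj h.symm⟩
          have h3 : 2 ≤ dN G s z := by
            have hc := Finset.card_le_card h2
            rwa [Finset.card_insert_of_notMem (by
              simp only [Finset.mem_singleton]; exact fun h => hxu h.symm),
              Finset.card_singleton] at hc
          have := hmax z hzs
          omega
      · -- dN u = 2 : use the lower bound
        have hlow := e2_lower (G := G) hu hxs' hsub'
        have h1 : 1 ≤ dN G s' x := Finset.card_pos.2 ⟨y, mem_bd.2
          ⟨hys', hxy.symm, fun h => hnadj h⟩⟩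
        omega
    -- build the matching
    refine ⟨{s(u, w), s(x, y)}, ?_, ?_, ?_, ?_⟩
    · intro e he
      simp only [Finset.mem_insert, Finset.mem_singleton] at he
      rcases he with rfl | rfl
      · exact ⟨u, w, hu, hw, hadj, rfl⟩
      · exact ⟨x, y, hxs, hys, hadj2, rfl⟩
    · intro e he f hf hef v hv
      simp only [Finset.mem_insert, Finset.mem_singleton] at he hf
      have key : ∀ a : Fin n, a ∈ s(u, w) → a ∈ s(x, y) → False := by
        intro a ha hb
        rw [Sym2.mem_iff] at ha hb
        rcases ha with rfl | rfl <;> rcases hb with h | h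
        · exact hxu h.symm
        · exact hyu h.symm
        · exact hxw h.symm
        · exact hyw h.symm
      rcases he with rfl | rfl <;> rcases hf with rfl | rfl
      · exact hef rfl
      · exact key v hv.1 hv.2
      · exact key v hv.2 hv.1
      · exact hef rfl
    · intro v hv
      by_cases h1 : v = u
      · exact ⟨s(u, w), by simp, by rw [h1]; simp⟩
      by_cases h2 : v = w
      · exact ⟨s(u, w), by simp, by rw [h2]; simp⟩
      have hvs' : v ∈ s' := Finset.mem_erase.2 ⟨h2, Finset.mem_erase.2 ⟨h1, hv⟩⟩
      rw [hs'eq] at hvs'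
      simp only [Finset.mem_insert, Finset.mem_singleton] at hvs'
      rcases hvs' with h3 | h3
      · exact ⟨s(x, y), by simp, by rw [h3]; simp⟩
      · exact ⟨s(x, y), by simp, by rw [h3]; simp⟩
    · intro e he v hv
      simp only [Finset.mem_insert, Finset.mem_singleton] at he
      rcases he with rfl | rfl <;> rw [Sym2.mem_iff] at hv
      · rcases hv with h | h
        · exact h ▸ hu
        · exact h ▸ hw
      · rcases hv with h | h
        · exact h ▸ hxs
        · exact h ▸ hys
  -- ============ step case k ≥ 6 ============
  · have hk6 : 6 ≤ k := by omega
    obtain ⟨hie, hid⟩ := hc6 hk6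
    obtain ⟨w, hwAu, hmaxA⟩ := Finset.exists_max_image (Au G s u) (dN G s) hAune
    have hw : w ∈ s := (mem_Au.1 hwAu).1
    have hwu : w ≠ u := (mem_Au.1 hwAu).2.1
    have hadj : G.Adj u w := (mem_Au.1 hwAu).2.2
    set s' := (s.erase u).erase w with hs'
    have hwe : w ∈ s.erase u := Finset.mem_erase.2 ⟨hwu, hw⟩
    have hs'card : s'.card = k - 2 := by
      rw [hs', Finset.card_erase_of_mem hwe, Finset.card_erase_of_mem hu, hcard]
      omega
    have hsub' : s' ⊆ s.erase u := Finset.erase_subset _ _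
    have hs's : s' ⊆ s := hsub'.trans (Finset.erase_subset _ _)
    have hkey := e2_erase_le (G := G) hu hw (Ne.symm hwu) hadj
    rw [← hs'] at hkey
    have hsplitc := card_erase_split (G := G) hu
    have hdNw : dN G s w ≤ dN G s u := hmax w hw
    -- invariant for k - 2 = 4
    have inv4 : k - 2 = 4 → e2 G s' ≤ 5 := by
      intro hkk
      have hk6' : k = 6 := by omega
      rcases Nat.lt_or_ge (dN G s u) 2 with hd | hd
      · -- dN u ≤ 1
        have hle := e2_le_card_mul (G := G) hmax
        rw [hcard] at hle
        have hmono := e2_mono (G := G) hs's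
        have hd1 : dN G s u = 0 ∨ dN G s u = 1 := by omega
        rcases hd1 with h | h <;> rw [h] at hle <;> omega
      rcases Nat.lt_or_ge (dN G s u) 3 with hd2 | hd2
      · -- dN u = 2
        have hdu : dN G s u = 2 := by omega
        have hAcard : (Au G s u).card = 3 := by omega
        have hsplit := e2_le_split (G := G) hu hmax hwAu hmaxA
        rw [hAcard, hdu] at hsplit
        omega
      · -- dN u ≥ 3
        omega
    -- invariant for 6 ≤ k - 2
    have inv6 : 6 ≤ k - 2 → e2 G s' + 1 ≤ 2 * (k - 2) ∧ ∀ v ∈ s', dN G s' v + 2 ≤ k - 2 := by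
      intro hkk
      constructor
      · rcases Nat.lt_or_ge (dN G s u) 2 with hd | hd
        · have hle := e2_le_card_mul (G := G) hmax
          rw [hcard] at hle
          have hmono := e2_mono (G := G) hs's
          have hd1 : dN G s u = 0 ∨ dN G s u = 1 := by omega
          rcases hd1 with h | h <;> rw [h] at hle <;> omega
        · omega
      · intro v hv
        by_contra hcon
        have hlow := e2_lower (G := G) hu hv hsub'
        have h1 : dN G s' v ≤ dN G s v := dN_mono hs's v
        have h2 : dN G s v ≤ dN G s u := hmax v (hs's hv)
        omega
    obtain ⟨M', hM1, hM2, hM3, hM4⟩ := ih (k - 2) (by omega) s' hs'card (by omega)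
      (by omega) inv4 inv6
    refine ⟨insert (s(u, w)) M', ?_, ?_, ?_, ?_⟩
    · intro e he
      rcases Finset.mem_insert.1 he with rfl | he'
      · exact ⟨u, w, hu, hw, hadj, rfl⟩
      · obtain ⟨x, y, hx, hy, ha, he⟩ := hM1 e he'
        exact ⟨x, y, hs's hx, hs's hy, ha, he⟩
    · intro e he f hf hef v hv
      have key : ∀ g, g ∈ M' → ∀ a : Fin n, a ∈ s(u, w) → a ∈ g → False := by
        intro g hg a ha hag
        have := hM4 g hg a hag
        rw [Sym2.mem_iff] at ha
        rcases ha with rfl | rfl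
        · exact (Finset.mem_erase.1 (hsub' this)).1 rfl
        · exact (Finset.mem_erase.1 this).1 rfl
      rcases Finset.mem_insert.1 he with rfl | he' <;> rcases Finset.mem_insert.1 hf with rfl | hf'
      · exact hef rfl
      · exact key f hf' v hv.1 hv.2
      · exact key e he' v hv.2 hv.1
      · exact hM2 e he' f hf' hef v hv
    · intro v hv
      by_cases h1 : v = u
      · exact ⟨s(u, w), Finset.mem_insert_self _ _, by rw [h1]; simp⟩
      by_cases h2 : v = w
      · exact ⟨s(u, w), Finset.mem_insert_self _ _, by rw [h2]; simp⟩
      · have hvs' : v ∈ s' := Finset.mem_erase.2 ⟨h2, Finset.mem_erase.2 ⟨h1, hv⟩⟩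
        obtain ⟨e, he, hve⟩ := hM3 v hvs'
        exact ⟨e, Finset.mem_insert_of_mem he, hve⟩
    · intro e he v hv
      rcases Finset.mem_insert.1 he with rfl | he'
      · rw [Sym2.mem_iff] at hv
        rcases hv with rfl | rfl
        · exact hu
        · exact hw
      · exact hs's (hM4 e he' v hv)

section generic
variable {n : ℕ} (G : SimpleGraph (Fin n))

lemma adjMat_nonneg (v u : Fin n) : 0 ≤ adjMat G v u := by
  unfold adjMat; split <;> norm_num

lemma adjMat_le_one (v u : Fin n) : adjMat G v u ≤ 1 := by
  unfold adjMat; split <;> norm_num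

lemma adjMat_symm (v u : Fin n) : adjMat G v u = adjMat G u v := by
  unfold adjMat
  by_cases h : G.Adj v u
  · rw [if_pos h, if_pos h.symm]
  · rw [if_neg h, if_neg (fun h' => h h'.symm)]

/-- row sums of the adjacency matrix are at most `n - 1 ≤ n` -/
lemma rowsum_le (v : Fin n) : ∑ w, adjMat G v w ≤ (n : ℝ) := by
  calc ∑ w, adjMat G v w ≤ ∑ _w : Fin n, (1:ℝ) :=
        Finset.sum_le_sum (fun w _ => adjMat_le_one G v w)
    _ = n := by simp

lemma rowsum_nonneg (v : Fin n) : 0 ≤ ∑ w, adjMat G v w :=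
  Finset.sum_nonneg (fun w _ => adjMat_nonneg G v w)

lemma qMat_apply (v u : Fin n) :
    qMat G v u = (if v = u then ∑ w, adjMat G v w else 0) + adjMat G v u := by
  unfold qMat
  rw [Matrix.add_apply, Matrix.diagonal_apply]

lemma qMat_nonneg (v u : Fin n) : 0 ≤ qMat G v u := by
  rw [qMat_apply]
  have := adjMat_nonneg G v u
  have := rowsum_nonneg G v
  split <;> nlinarith

lemma qMat_rowsum (v : Fin n) : ∑ u, qMat G v u = 2 * ∑ w, adjMat G v w := by
  have : ∀ u, qMat G v u = (if v = u then ∑ w, adjMat G v w else 0) + adjMat G v u :=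
    qMat_apply G v
  rw [Finset.sum_congr rfl (fun u _ => this u), Finset.sum_add_distrib,
    Finset.sum_ite_eq Finset.univ v (fun _ => ∑ w, adjMat G v w)]
  simp
  ring

lemma mulVec_apply (M : Matrix (Fin n) (Fin n) ℝ) (x : Fin n → ℝ) (v : Fin n) :
    M.mulVec x v = ∑ u, M v u * x u := by
  rfl

/-- any eigenvalue of `qMat` is at most `2n` -/
lemma eig_le_two_n {t : ℝ} {x : Fin n → ℝ} (hx : x ≠ 0)
    (heig : (qMat G).mulVec x = t • x) : t ≤ 2 * n := by
  obtain ⟨u0, hu0⟩ := Function.ne_iff.1 hx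
  obtain ⟨v, -, hvmax⟩ := Finset.exists_max_image Finset.univ (fun v => |x v|)
    ⟨u0, Finset.mem_univ _⟩
  have hvpos : 0 < |x v| := by
    have h1 : 0 < |x u0| := abs_pos.2 hu0
    linarith [hvmax u0 (Finset.mem_univ u0)]
  have hrow : ∑ u, qMat G v u ≤ 2 * n := by
    rw [qMat_rowsum]
    linarith [rowsum_le G v]
  have heigv : t * x v = ∑ u, qMat G v u * x u := by
    have h := congrFun heig v
    rw [mulVec_apply] at h
    rw [h]
    simp
  have habs : |t| * |x v| ≤ (2 * n) * |x v| := by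
    calc |t| * |x v| = |t * x v| := (abs_mul t (x v)).symm
      _ = |∑ u, qMat G v u * x u| := by rw [heigv]
      _ ≤ ∑ u, |qMat G v u * x u| := Finset.abs_sum_le_sum_abs _ _
      _ = ∑ u, qMat G v u * |x u| := by
          refine Finset.sum_congr rfl (fun u _ => ?_)
          rw [abs_mul, abs_of_nonneg (qMat_nonneg G v u)]
      _ ≤ ∑ u, qMat G v u * |x v| :=
          Finset.sum_le_sum (fun u _ => by
            have := qMat_nonneg G v u
            have := hvmax u (Finset.mem_univ u)
            nlinarith)
      _ = (∑ u, qMat G v u) * |x v| := by rw [Finset.sum_mul]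
      _ ≤ (2 * n) * |x v| := by
          have := hrow
          nlinarith
  have : |t| ≤ 2 * n := by
    by_contra h
    push_neg at h
    nlinarith
  calc t ≤ |t| := le_abs_self t
    _ ≤ 2 * n := this

lemma qMat_eigs_bddAbove :
    BddAbove {t : ℝ | ∃ x : Fin n → ℝ, x ≠ 0 ∧ (qMat G).mulVec x = t • x} := by
  refine ⟨2 * n, fun t ht => ?_⟩
  obtain ⟨x, hx, heig⟩ := ht
  exact eig_le_two_n G hx heig

end generic

section thrbound
variable {n : ℕ} (G : SimpleGraph (Fin n))

/-- number of neighbours -/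
noncomputable def ndeg (v : Fin n) : ℕ := (Au G Finset.univ v).card

lemma ndeg_split (v : Fin n) : n = 1 + dN G Finset.univ v + ndeg G v := by
  have := card_erase_split (G := G) (Finset.mem_univ v)
  rwa [Finset.card_univ, Fintype.card_fin] at this

lemma rowsum_eq_ndeg (v : Fin n) : ∑ w, adjMat G v w = (ndeg G v : ℝ) := by
  unfold adjMat ndeg
  classical
  rw [Finset.sum_boole]
  congr 1
  apply Finset.card_nbij' id id
  · intro z hz
    rw [Finset.mem_coe, Finset.mem_filter] at hz
    exact mem_Au.2 ⟨Finset.mem_univ _, hz.2.ne', hz.2⟩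
  · intro z hz
    rw [Finset.mem_coe, Finset.mem_filter]
    exact ⟨Finset.mem_univ _, (mem_Au.1 hz).2.2⟩
  · intro z _; rfl
  · intro z _; rfl

lemma adj_sum_eq (v : Fin n) (f : Fin n → ℝ) :
    ∑ u, adjMat G v u * f u = ∑ u ∈ Au G Finset.univ v, f u := by
  classical
  unfold adjMat
  have h1 : ∀ u, (if G.Adj v u then (1:ℝ) else 0) * f u = if G.Adj v u then f u else 0 := by
    intro u; split <;> ring
  rw [Finset.sum_congr rfl (fun u _ => h1 u), Finset.sum_ite, Finset.sum_const_zero, add_zero]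
  congr 1
  ext z
  rw [Finset.mem_filter, mem_Au]
  constructor
  · exact fun h => ⟨Finset.mem_univ _, h.2.ne', h.2⟩
  · exact fun h => ⟨Finset.mem_univ _, h.2.2⟩

lemma sum_ndeg_split (v : Fin n) :
    (∑ w, ndeg G w) = ndeg G v + ((∑ u ∈ bd G Finset.univ v, ndeg G u)
      + ∑ u ∈ Au G Finset.univ v, ndeg G u) := by
  rw [← Finset.add_sum_erase _ _ (Finset.mem_univ v), erase_eq_bd_union_Au (G := G),
    Finset.sum_union bd_Au_disj]

lemma total_ndeg : (∑ w, ndeg G w) + e2 G Finset.univ + n = n * n := by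
  have h1 : e2 G Finset.univ = ∑ v, dN G Finset.univ v := e2_eq_sum
  have h2 : ∀ v : Fin n, 1 + dN G Finset.univ v + ndeg G v = n := fun v => (ndeg_split G v).symm
  have h3 : ∑ _v : Fin n, (1 : ℕ) = n := by simp
  calc (∑ w, ndeg G w) + e2 G Finset.univ + n
      = (∑ w, ndeg G w) + (∑ v, dN G Finset.univ v) + (∑ _v : Fin n, (1:ℕ)) := by rw [h1, h3]
    _ = ∑ v : Fin n, (1 + dN G Finset.univ v + ndeg G v) := by
        rw [Finset.sum_add_distrib, Finset.sum_add_distrib]; ring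
    _ = ∑ _v : Fin n, n := Finset.sum_congr rfl (fun v _ => h2 v)
    _ = n * n := by simp [mul_comm]

lemma ndeg_le (v : Fin n) : ndeg G v + 1 ≤ n := by
  have := ndeg_split G v; omega

set_option maxHeartbeats 1600000 in
/-- Main threshold bound: if the complement has at least `n-2` edges, every
eigenvalue of `qMat G` is at most `2n - 4 + 2/(n-1)`. -/
lemma eig_le_thr (hn : 8 ≤ n) (hmc : 2 * n ≤ e2 G Finset.univ + 4)
    {t : ℝ} {x : Fin n → ℝ} (hx : x ≠ 0) (heig : (qMat G).mulVec x = t • x) :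
    t ≤ 2 * n - 4 + 2 / ((n : ℝ) - 1) := by
  classical
  have hnR : (8 : ℝ) ≤ (n : ℝ) := by exact_mod_cast hn
  by_contra hgt
  push_neg at hgt
  have hn1R : (0:ℝ) < (n:ℝ) - 1 := by linarith
  have hfracpos : (0:ℝ) < 2 / ((n:ℝ) - 1) := div_pos two_pos hn1R
  have htpos : 0 < t := by nlinarith
  -- x vanishes on isolated vertices
  have hzero : ∀ v, ndeg G v = 0 → x v = 0 := by
    intro v hv
    have h := congrFun heig v
    rw [mulVec_apply] at h
    have hQ : ∀ u, qMat G v u * x u = 0 := by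
      intro u
      rw [qMat_apply]
      have hA : adjMat G v u = 0 := by
        unfold adjMat
        rw [if_neg]
        intro hadj
        have hmem : u ∈ Au G Finset.univ v := mem_Au.2 ⟨Finset.mem_univ _, hadj.ne', hadj⟩
        have hpos : 0 < ndeg G v := Finset.card_pos.2 ⟨u, hmem⟩
        omega
      have hD : ∑ w, adjMat G v w = 0 := by
        rw [rowsum_eq_ndeg, hv]; simp
      rw [hA, hD]
      simp
    have h0 : (t • x) v = 0 := by
      rw [← h]
      exact Finset.sum_eq_zero (fun u _ => hQ u)
    rw [Pi.smul_apply, smul_eq_mul] at h0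
    rcases mul_eq_zero.1 h0 with h2 | h2
    · exact absurd h2 (ne_of_gt htpos)
    · exact h2
  obtain ⟨u0, hu0⟩ := Function.ne_iff.1 hx
  have hu0d : 0 < ndeg G u0 := by
    rcases Nat.eq_zero_or_pos (ndeg G u0) with h | h
    · exact absurd (hzero u0 h) hu0
    · exact h
  set P : Finset (Fin n) := Finset.univ.filter (fun v => 0 < ndeg G v) with hP
  have hu0P : u0 ∈ P := by rw [hP, Finset.mem_filter]; exact ⟨Finset.mem_univ _, hu0d⟩
  obtain ⟨v, hvP, hvmax⟩ := Finset.exists_max_image P (fun v => |x v| / ndeg G v) ⟨u0, hu0P⟩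
  have hvd : 0 < ndeg G v := (Finset.mem_filter.1 hvP).2
  have hvdR : 0 < (ndeg G v : ℝ) := by exact_mod_cast hvd
  have hyv : 0 < |x v| / ndeg G v := by
    have h1 : 0 < |x u0| / ndeg G u0 := by
      have : 0 < |x u0| := abs_pos.2 hu0
      positivity
    linarith [hvmax u0 hu0P]
  -- the eigen-row at v, in absolute value
  have hrow : t * |x v| ≤ (ndeg G v) * |x v| + ∑ u ∈ Au G Finset.univ v, |x u| := by
    have h := congrFun heig v
    rw [mulVec_apply] at h
    have h' : t * x v = ∑ u, qMat G v u * x u := by rw [h]; simp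
    have habs : t * |x v| ≤ ∑ u, qMat G v u * |x u| := by
      calc t * |x v| = |t * x v| := by
            rw [abs_mul, abs_of_pos htpos]
        _ = |∑ u, qMat G v u * x u| := by rw [h']
        _ ≤ ∑ u, |qMat G v u * x u| := Finset.abs_sum_le_sum_abs _ _
        _ = ∑ u, qMat G v u * |x u| := Finset.sum_congr rfl (fun u _ => by
            rw [abs_mul, abs_of_nonneg (qMat_nonneg G v u)])
    have hsplit : ∑ u, qMat G v u * |x u| =
        (ndeg G v) * |x v| + ∑ u ∈ Au G Finset.univ v, |x u| := by
      have : ∀ u, qMat G v u * |x u| =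
          (if v = u then (∑ w, adjMat G v w) * |x u| else 0) + adjMat G v u * |x u| := by
        intro u
        rw [qMat_apply]
        split <;> ring
      rw [Finset.sum_congr rfl (fun u _ => this u), Finset.sum_add_distrib,
        Finset.sum_ite_eq Finset.univ v, if_pos (Finset.mem_univ v),
        rowsum_eq_ndeg, adj_sum_eq]
    linarith [habs, hsplit.le, hsplit.ge]
  -- bound the neighbour sum via the maximality of y at v
  have hnbr : ∑ u ∈ Au G Finset.univ v, |x u| ≤
      (∑ u ∈ Au G Finset.univ v, (ndeg G u : ℝ)) * (|x v| / ndeg G v) := by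
    rw [Finset.sum_mul]
    refine Finset.sum_le_sum (fun u hu => ?_)
    have hadj : G.Adj v u := (mem_Au.1 hu).2.2
    have hud : 0 < ndeg G u := by
      have : v ∈ Au G Finset.univ u := mem_Au.2 ⟨Finset.mem_univ _, hadj.symm.ne', hadj.symm⟩
      have := Finset.card_pos.2 ⟨v, this⟩
      exact this
    have hudR : 0 < (ndeg G u : ℝ) := by exact_mod_cast hud
    have huP : u ∈ P := by rw [hP, Finset.mem_filter]; exact ⟨Finset.mem_univ _, hud⟩
    have := hvmax u huP
    calc |x u| = (ndeg G u : ℝ) * (|x u| / ndeg G u) := by field_simp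
      _ ≤ (ndeg G u : ℝ) * (|x v| / ndeg G v) := by
          apply mul_le_mul_of_nonneg_left this (le_of_lt hudR)
  -- key scalar inequality : t * d ≤ d^2 + S
  set d : ℝ := (ndeg G v : ℝ) with hdd
  set S : ℝ := ∑ u ∈ Au G Finset.univ v, (ndeg G u : ℝ) with hSS
  have hSnn : 0 ≤ S := Finset.sum_nonneg (fun u _ => by positivity)
  have hkey : t * d ≤ d * d + S := by
    have h1 : t * |x v| ≤ d * |x v| + S * (|x v| / d) := by
      calc t * |x v| ≤ (ndeg G v) * |x v| + ∑ u ∈ Au G Finset.univ v, |x u| := hrow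
        _ ≤ d * |x v| + S * (|x v| / d) := by
            rw [hdd]
            linarith [hnbr]
    have hxvpos : 0 < |x v| := by
      by_contra hc
      push_neg at hc
      have : |x v| = 0 := le_antisymm hc (abs_nonneg _)
      rw [this, zero_div] at hyv
      exact lt_irrefl _ hyv
    have h2 : t * |x v| * d ≤ (d * d + S) * |x v| := by
      have := mul_le_mul_of_nonneg_right h1 (le_of_lt hvdR)
      calc t * |x v| * d ≤ (d * |x v| + S * (|x v| / d)) * d := this
        _ = (d * d + S) * |x v| := by field_simp
    nlinarith [h2, hxvpos, hvdR]
  -- now the counting bounds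
  have hT := total_ndeg G
  set T : ℕ := ∑ w, ndeg G w with hTT
  have hTR : (T : ℝ) + e2 G Finset.univ + n = n * n := by exact_mod_cast hT
  have he2R : 2 * (n:ℝ) ≤ (e2 G Finset.univ : ℝ) + 4 := by exact_mod_cast hmc
  have hdle := ndeg_le G v
  have hS_le_T : ∀ (extra : ℕ), extra ≤ ∑ u ∈ bd G Finset.univ v, ndeg G u →
      S + d + extra ≤ (T:ℝ) := by
    intro extra hextra
    have := sum_ndeg_split G v
    have hnat : (∑ u ∈ Au G Finset.univ v, ndeg G u) + ndeg G v + extra ≤ T := by omega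
    have : ((∑ u ∈ Au G Finset.univ v, ndeg G u : ℕ) : ℝ) + (ndeg G v : ℝ) + extra ≤ (T:ℝ) := by
      exact_mod_cast hnat
    rw [hSS, hdd]
    push_cast at this ⊢
    linarith
  rcases Nat.lt_or_ge (ndeg G v) (n - 2) with hcase | hcase
  · -- d ≤ n - 3 : use S ≤ d (n-1)
    have hSb : S ≤ d * ((n:ℝ) - 1) := by
      rw [hSS, hdd]
      calc ∑ u ∈ Au G Finset.univ v, (ndeg G u : ℝ)
          ≤ ∑ _u ∈ Au G Finset.univ v, ((n:ℝ) - 1) := by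
            refine Finset.sum_le_sum (fun u _ => ?_)
            have := ndeg_le G u
            have : (ndeg G u : ℝ) + 1 ≤ n := by exact_mod_cast this
            linarith
        _ = (Au G Finset.univ v).card * ((n:ℝ) - 1) := by
            rw [Finset.sum_const, nsmul_eq_mul]
        _ = (ndeg G v : ℝ) * ((n:ℝ) - 1) := rfl
    have hdb : d ≤ (n:ℝ) - 3 := by
      have : ndeg G v + 3 ≤ n := by omega
      have : (ndeg G v : ℝ) + 3 ≤ n := by exact_mod_cast this
      rw [hdd]; linarith
    have ht : t ≤ d + ((n:ℝ) - 1) := by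
      nlinarith [hkey, hSb, hvdR]
    nlinarith
  rcases Nat.lt_or_ge (ndeg G v) (n - 1) with hcase2 | hcase2
  · -- d = n - 2
    have hdn2 : ndeg G v = n - 2 := by omega
    have hdR : d = (n:ℝ) - 2 := by
      rw [hdd, hdn2]
      have : ((n - 2 : ℕ) : ℝ) = (n:ℝ) - 2 := by
        have : (2:ℕ) ≤ n := by omega
        push_cast [Nat.cast_sub this]
        ring
      rw [this]
    have hbd1 : dN G Finset.univ v = 1 := by
      have := ndeg_split G v
      omega
    have hbdne : (bd G Finset.univ v).Nonempty := by
      rw [← Finset.card_pos]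
      unfold dN at hbd1
      omega
    obtain ⟨w, hw⟩ := hbdne
    rcases Nat.eq_zero_or_pos (ndeg G w) with hw0 | hw1
    · -- w is isolated : complement is big
      have hwdn : dN G Finset.univ w = n - 1 := by
        have := ndeg_split G w
        omega
      have he2big : 2 * (n - 1) ≤ e2 G Finset.univ := by
        have := two_dN_le_e2 (G := G) (Finset.mem_univ w)
        omega
      have he2bigR : 2 * ((n:ℝ) - 1) ≤ e2 G Finset.univ := by
        have h' : 2 * n ≤ e2 G Finset.univ + 2 := by omega
        have : (2 * n : ℝ) ≤ (e2 G Finset.univ : ℝ) + 2 := by exact_mod_cast h'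
        linarith
      have hSb : S + d ≤ (T:ℝ) := by
        have := hS_le_T 0 (Nat.zero_le _)
        simpa using this
      have hTb : (T:ℝ) ≤ ((n:ℝ) - 1) * ((n:ℝ) - 2) := by nlinarith [hTR, he2bigR, sq_nonneg ((n:ℝ))]
      have ht : t ≤ 2 * (n:ℝ) - 4 := by
        rw [hdR] at hkey
        nlinarith [hkey, hSb, hTb, hnR]
      nlinarith
    · -- w has a neighbour
      have hSb : S + d + 1 ≤ (T:ℝ) := by
        have : 1 ≤ ∑ u ∈ bd G Finset.univ v, ndeg G u :=
          le_trans hw1 (Finset.single_le_sum (fun u _ => Nat.zero_le _) hw)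
        have := hS_le_T 1 this
        simpa using this
      have hTb : (T:ℝ) ≤ (n:ℝ) * (n:ℝ) - 3 * n + 4 := by linarith [hTR, he2R]
      -- t (n-2) ≤ (n-2)^2 + n^2-4n+5 = 2n^2-8n+9 ≤ thr (n-2)
      have h2 : 0 < (n:ℝ) - 2 := by linarith
      have h1 : 0 < (n:ℝ) - 1 := hn1R
      have hthr : (2 * (n:ℝ) - 4 + 2 / ((n:ℝ) - 1)) * ((n:ℝ) - 2) ≥
          2 * (n:ℝ) * n - 8 * n + 9 := by
        have he : 2 / ((n:ℝ) - 1) * ((n:ℝ) - 1) = 2 := by field_simp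
        have hfrac : (1:ℝ) ≤ 2 / ((n:ℝ) - 1) * ((n:ℝ) - 2) := by
          have hrw : 2 / ((n:ℝ) - 1) * ((n:ℝ) - 2) = (2 * ((n:ℝ) - 2)) / ((n:ℝ) - 1) := by
            ring
          rw [hrw, le_div_iff₀ h1]
          linarith
        nlinarith
      rw [hdR] at hkey
      rw [hdR] at hSb
      nlinarith [hkey, hSb, hTb, hthr, mul_pos (sub_pos.2 hgt) h2]
  · -- d = n - 1
    have hdn1 : ndeg G v = n - 1 := by omega
    have hdR : d = (n:ℝ) - 1 := by
      rw [hdd, hdn1]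
      have h2 : (1:ℕ) ≤ n := by omega
      push_cast [Nat.cast_sub h2]
      ring
    have hSb : S + d ≤ (T:ℝ) := by
      have := hS_le_T 0 (Nat.zero_le _)
      simpa using this
    have hTb : (T:ℝ) ≤ (n:ℝ) * (n:ℝ) - 3 * n + 4 := by linarith [hTR, he2R]
    have h1 : 0 < (n:ℝ) - 1 := hn1R
    -- t(n-1) ≤ (n-1)^2 + (n^2-3n+4) - (n-1) = 2n^2 - 6n + 6 = thr (n-1)
    have hthr : (2 * (n:ℝ) - 4 + 2 / ((n:ℝ) - 1)) * ((n:ℝ) - 1) =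
        2 * (n:ℝ) * n - 6 * n + 6 := by
      field_simp
      ring
    rw [hdR] at hkey
    rw [hdR] at hSb
    nlinarith [hkey, hSb, hTb, mul_pos (sub_pos.2 hgt) h1, hthr]

end thrbound

section model
variable {n : ℕ}

lemma modelA_adj {i j : Fin n} :
    (modelA n 2 1).Adj i j ↔ i ≠ j ∧ ((i:ℕ) < 2 ∨ (j:ℕ) < 2 ∨ (3 ≤ (i:ℕ) ∧ 3 ≤ (j:ℕ))) :=
  Iff.rfl

/-- generic expansion of `qMat`'s action -/
lemma qMat_mulVec (G : SimpleGraph (Fin n)) (x : Fin n → ℝ) (i : Fin n) :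
    (qMat G).mulVec x i = (∑ w, adjMat G i w) * x i + ∑ j, adjMat G i j * x j := by
  rw [mulVec_apply]
  have : ∀ u, qMat G i u * x u =
      (if i = u then (∑ w, adjMat G i w) * x u else 0) + adjMat G i u * x u := by
    intro u
    rw [qMat_apply]
    split <;> ring
  rw [Finset.sum_congr rfl (fun u _ => this u), Finset.sum_add_distrib,
    Finset.sum_ite_eq Finset.univ i, if_pos (Finset.mem_univ i)]

lemma msum_lt2 (hn : 3 ≤ n) {i : Fin n} (hi : (i:ℕ) < 2) (h : Fin n → ℝ) :
    ∑ j, adjMat (modelA n 2 1) i j * h j = (∑ j, h j) - h i := by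
  have key : ∀ j : Fin n, adjMat (modelA n 2 1) i j * h j
      = h j - (if j = i then h j else 0) := by
    intro j
    by_cases hji : j = i
    · subst hji
      rw [if_pos rfl]
      have : ¬ (modelA n 2 1).Adj j j := (modelA n 2 1).loopless.irrefl j
      unfold adjMat
      rw [if_neg this]
      ring
    · rw [if_neg hji]
      have : (modelA n 2 1).Adj i j := modelA_adj.2 ⟨fun hh => hji hh.symm, Or.inl hi⟩
      unfold adjMat
      rw [if_pos this]
      ring
  rw [Finset.sum_congr rfl (fun j _ => key j), Finset.sum_sub_distrib,
    Finset.sum_ite_eq' Finset.univ i, if_pos (Finset.mem_univ i)]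

lemma filter_lt2 (hn : 3 ≤ n) :
    Finset.univ.filter (fun j : Fin n => (j:ℕ) < 2)
      = {(⟨0, by omega⟩ : Fin n), ⟨1, by omega⟩} := by
  ext z
  simp only [Finset.mem_filter, Finset.mem_univ, true_and, Finset.mem_insert,
    Finset.mem_singleton, Fin.ext_iff]
  omega

lemma msum_eq2 (hn : 3 ≤ n) {i : Fin n} (hi : (i:ℕ) = 2) (h : Fin n → ℝ) :
    ∑ j, adjMat (modelA n 2 1) i j * h j
      = h ⟨0, by omega⟩ + h ⟨1, by omega⟩ := by
  have key : ∀ j : Fin n, adjMat (modelA n 2 1) i j * h j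
      = if (j:ℕ) < 2 then h j else 0 := by
    intro j
    by_cases hj : (j:ℕ) < 2
    · rw [if_pos hj]
      have : (modelA n 2 1).Adj i j := modelA_adj.2
        ⟨fun hh => by rw [hh] at hi; omega, Or.inr (Or.inl hj)⟩
      unfold adjMat
      rw [if_pos this]
      ring
    · rw [if_neg hj]
      have : ¬ (modelA n 2 1).Adj i j := by
        rw [modelA_adj]
        rintro ⟨h1, h2 | h2 | h2⟩ <;> omega
      unfold adjMat
      rw [if_neg this]
      ring
  rw [Finset.sum_congr rfl (fun j _ => key j), Finset.sum_ite, Finset.sum_const_zero,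
    add_zero, filter_lt2 hn, Finset.sum_insert, Finset.sum_singleton]
  simp only [Finset.mem_singleton, Fin.ext_iff]
  omega

lemma msum_ge3 (hn : 3 ≤ n) {i : Fin n} (hi : 3 ≤ (i:ℕ)) (h : Fin n → ℝ) :
    ∑ j, adjMat (modelA n 2 1) i j * h j
      = (∑ j, h j) - h i - h ⟨2, by omega⟩ := by
  have key : ∀ j : Fin n, adjMat (modelA n 2 1) i j * h j
      = h j - (if j = i then h j else 0) - (if j = (⟨2, by omega⟩ : Fin n) then h j else 0) := by
    intro j
    by_cases hji : j = i
    · subst hji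
      rw [if_pos rfl, if_neg (by rw [Fin.ext_iff]; simp; omega)]
      have : ¬ (modelA n 2 1).Adj j j := (modelA n 2 1).loopless.irrefl j
      unfold adjMat
      rw [if_neg this]
      ring
    · rw [if_neg hji]
      by_cases hj2 : j = (⟨2, by omega⟩ : Fin n)
      · rw [if_pos hj2]
        have hv : (j:ℕ) = 2 := by rw [hj2]
        have : ¬ (modelA n 2 1).Adj i j := by
          rw [modelA_adj]
          rintro ⟨h1, h2 | h2 | h2⟩ <;> omega
        unfold adjMat
        rw [if_neg this]
        ring
      · rw [if_neg hj2]
        have hv : (j:ℕ) ≠ 2 := by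
          intro hh
          exact hj2 (Fin.ext_iff.2 (by simpa using hh))
        have : (modelA n 2 1).Adj i j := by
          rw [modelA_adj]
          refine ⟨fun hh => hji hh.symm, ?_⟩
          rcases Nat.lt_or_ge (j:ℕ) 2 with hc | hc
          · exact Or.inr (Or.inl hc)
          · exact Or.inr (Or.inr ⟨hi, by omega⟩)
        unfold adjMat
        rw [if_pos this]
        ring
  rw [Finset.sum_congr rfl (fun j _ => key j), Finset.sum_sub_distrib, Finset.sum_sub_distrib,
    Finset.sum_ite_eq' Finset.univ i, Finset.sum_ite_eq' Finset.univ (⟨2, by omega⟩ : Fin n),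
    if_pos (Finset.mem_univ i), if_pos (Finset.mem_univ _)]

end model

section modeleig
variable {n : ℕ}

lemma filter_eq2 (hn : 3 ≤ n) :
    Finset.univ.filter (fun j : Fin n => (j:ℕ) = 2) = {(⟨2, by omega⟩ : Fin n)} := by
  ext z
  simp only [Finset.mem_filter, Finset.mem_univ, true_and, Finset.mem_singleton, Fin.ext_iff]

lemma sum_xvec (hn : 3 ≤ n) (b c : ℝ) :
    ∑ j : Fin n, (if ((j:ℕ) < 2) then (1:ℝ) else if (j:ℕ) = 2 then b else c)
      = 2 + b + ((n:ℝ) - 3) * c := by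
  have key : ∀ j : Fin n, (if ((j:ℕ) < 2) then (1:ℝ) else if (j:ℕ) = 2 then b else c)
      = (if ((j:ℕ) < 2) then (1 - c : ℝ) else 0) + (if ((j:ℕ) = 2) then (b - c : ℝ) else 0)
        + c := by
    intro j
    rcases Nat.lt_or_ge (j:ℕ) 2 with h1 | h1
    · have hb2 : ¬ ((j:ℕ) = 2) := by omega
      rw [if_pos h1, if_pos h1, if_neg hb2]
      ring
    · have ha : ¬ ((j:ℕ) < 2) := by omega
      rcases Nat.eq_or_lt_of_le h1 with h2 | h2
      · have hb2 : (j:ℕ) = 2 := h2.symm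
        rw [if_neg ha, if_neg ha, if_pos hb2, if_pos hb2]
        ring
      · have hb2 : ¬ ((j:ℕ) = 2) := by omega
        rw [if_neg ha, if_neg ha, if_neg hb2, if_neg hb2]
        ring
  rw [Finset.sum_congr rfl (fun j _ => key j)]
  rw [Finset.sum_add_distrib, Finset.sum_add_distrib, Finset.sum_ite, Finset.sum_ite,
    Finset.sum_const_zero, Finset.sum_const_zero, add_zero, add_zero,
    Finset.sum_const, Finset.sum_const, Finset.sum_const,
    filter_lt2 hn, filter_eq2 hn]
  have hcard2 : ({(⟨0, by omega⟩ : Fin n), ⟨1, by omega⟩} : Finset (Fin n)).card = 2 := by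
    rw [Finset.card_insert_of_notMem (by simp [Fin.ext_iff]), Finset.card_singleton]
  rw [hcard2, Finset.card_singleton, Finset.card_univ, Fintype.card_fin]
  have h3R : (3:ℝ) ≤ (n:ℝ) := by exact_mod_cast hn
  simp only [nsmul_eq_mul]
  ring

/-- the cubic polynomial whose largest root is `q(modelA n 2 1)` -/
noncomputable def gcube (n : ℕ) (t : ℝ) : ℝ :=
  (t - n) * (t - 2) * (t - (2*n - 6)) - 2 * (t - (2*n - 6)) - 2 * ((n:ℝ) - 3) * (t - 2)

lemma gcube_root (hn : 8 ≤ n) :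
    ∃ t : ℝ, (2*(n:ℝ) - 4 + 2/((n:ℝ)-1)) < t ∧ t ≤ 2*n ∧ gcube n t = 0 := by
  have hnR : (8:ℝ) ≤ (n:ℝ) := by exact_mod_cast hn
  have hn1 : (0:ℝ) < (n:ℝ) - 1 := by linarith
  obtain ⟨e, he, hepos, hele, hthr_eq⟩ :
      ∃ e : ℝ, e * ((n:ℝ)-1) = 2 ∧ 0 < e ∧ e ≤ 2/7 ∧
        2*(n:ℝ) - 4 + 2/((n:ℝ)-1) = 2*(n:ℝ) - 4 + e := by
    refine ⟨2/((n:ℝ)-1), by field_simp, div_pos two_pos hn1, ?_, rfl⟩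
    apply div_le_div_of_nonneg_left (by norm_num) (by norm_num) (by linarith)
  rw [hthr_eq]
  have hgthr : gcube n (2*(n:ℝ) - 4 + e) < 0 := by
    have hid : gcube n (2*(n:ℝ) - 4 + e) = -8 + e^2*(3*(n:ℝ)-8) + e^3 := by
      unfold gcube
      linear_combination (2*((n:ℝ)-4)) * he
    have h1 : e^2*(3*(n:ℝ)-8) ≤ 6*e := by nlinarith [sq_nonneg e, he, hepos]
    have h2 : e^3 ≤ e := by nlinarith [hepos, hele]
    rw [hid]
    nlinarith [hepos, hele]
  have hg2n : 0 ≤ gcube n (2*n) := by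
    unfold gcube
    nlinarith [hnR]
  have hthrle : 2*(n:ℝ) - 4 + e ≤ 2*(n:ℝ) := by nlinarith [hele]
  have hcont : ContinuousOn (gcube n) (Set.Icc (2*(n:ℝ) - 4 + e) (2*(n:ℝ))) := by
    apply Continuous.continuousOn
    unfold gcube
    fun_prop
  have hmem : (0:ℝ) ∈ Set.Icc (gcube n (2*(n:ℝ) - 4 + e)) (gcube n (2*(n:ℝ))) :=
    ⟨le_of_lt hgthr, hg2n⟩
  obtain ⟨t, htmem, htroot⟩ := intermediate_value_Icc hthrle hcont hmem
  refine ⟨t, ?_, htmem.2, htroot⟩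
  rcases eq_or_lt_of_le htmem.1 with heq | hlt
  · exfalso
    rw [← heq] at htroot
    rw [htroot] at hgthr
    exact lt_irrefl _ hgthr
  · exact hlt

/-- the model graph has an eigenvalue strictly above the threshold -/
lemma model_eig (hn : 8 ≤ n) :
    ∃ t : ℝ, (2*(n:ℝ) - 4 + 2/((n:ℝ)-1)) < t ∧
      ∃ x : Fin n → ℝ, x ≠ 0 ∧ (qMat (modelA n 2 1)).mulVec x = t • x := by
  obtain ⟨t, htgt, htle, htroot⟩ := gcube_root hn
  have hnR : (8:ℝ) ≤ (n:ℝ) := by exact_mod_cast hn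
  have hn1 : (0:ℝ) < (n:ℝ) - 1 := by linarith
  have hfrac : (0:ℝ) < 2/((n:ℝ)-1) := div_pos two_pos hn1
  have ht2 : (0:ℝ) < t - 2 := by nlinarith
  have ht2n6 : (0:ℝ) < t - (2*(n:ℝ) - 6) := by nlinarith
  obtain ⟨b, hb⟩ : ∃ b : ℝ, b * (t - 2) = 2 :=
    ⟨2/(t-2), by field_simp⟩
  obtain ⟨c, hc⟩ : ∃ c : ℝ, c * (t - (2*(n:ℝ) - 6)) = 2 :=
    ⟨2/(t - (2*(n:ℝ) - 6)), by field_simp⟩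
  have h2 : (t - (n:ℝ)) * (t-2) * (t - (2*(n:ℝ)-6))
      = 2 * (t - (2*(n:ℝ)-6)) + 2*((n:ℝ)-3) * (t-2) := by
    unfold gcube at htroot
    linarith [htroot]
  have hbc : b + ((n:ℝ) - 3) * c = t - (n:ℝ) := by
    have hmul : (b + ((n:ℝ) - 3) * c - (t - (n:ℝ))) * ((t-2) * (t - (2*(n:ℝ)-6))) = 0 := by
      linear_combination (t - (2*(n:ℝ)-6)) * hb + (((n:ℝ)-3) * (t-2)) * hc - h2
    rcases mul_eq_zero.1 hmul with h | h
    · linarith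
    · exfalso
      rcases mul_eq_zero.1 h with h' | h' <;> nlinarith
  set x : Fin n → ℝ :=
    fun j => if ((j:ℕ) < 2) then (1:ℝ) else if (j:ℕ) = 2 then b else c with hx_def
  have hn3 : 3 ≤ n := by omega
  have hSig : ∑ j, x j = 2 + b + ((n:ℝ) - 3) * c := sum_xvec hn3 b c
  have hx0 : x ⟨0, by omega⟩ = 1 := by simp [hx_def]
  have hx1 : x ⟨1, by omega⟩ = 1 := by simp [hx_def]
  have hx2 : x ⟨2, by omega⟩ = b := by simp [hx_def]
  refine ⟨t, htgt, x, ?_, ?_⟩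
  · intro hzero
    have h0 : x ⟨0, by omega⟩ = 0 := by rw [hzero]; rfl
    rw [hx0] at h0
    exact one_ne_zero h0
  · funext i
    rw [qMat_mulVec, Pi.smul_apply, smul_eq_mul]
    rcases Nat.lt_or_ge (i:ℕ) 2 with hi | hi
    · -- i < 2 : degree n - 1
      have hdeg : ∑ w, adjMat (modelA n 2 1) i w = (n:ℝ) - 1 := by
        have h := msum_lt2 hn3 hi (fun _ => (1:ℝ))
        simp only [mul_one] at h
        rw [h, Finset.sum_const, Finset.card_univ, Fintype.card_fin, nsmul_eq_mul, mul_one]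
      have hxi : x i = 1 := by rw [hx_def]; simp only [if_pos hi]
      rw [hdeg, msum_lt2 hn3 hi x, hSig, hxi]
      linarith [hbc]
    rcases Nat.eq_or_lt_of_le hi with hi2 | hi3
    · -- i = 2 : degree 2
      have hdeg : ∑ w, adjMat (modelA n 2 1) i w = 2 := by
        have h := msum_eq2 hn3 hi2.symm (fun _ => (1:ℝ))
        simp only [mul_one] at h
        rw [h]
        norm_num
      have hxi : x i = b := by
        rw [hx_def]
        simp only [if_neg (by omega : ¬ (i:ℕ) < 2), if_pos hi2.symm]
      rw [hdeg, msum_eq2 hn3 hi2.symm x, hxi, hx0, hx1]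
      linear_combination (-1 : ℝ) * hb
    · -- i ≥ 3 : degree n - 2
      have hi3' : 3 ≤ (i:ℕ) := hi3
      have hxi : x i = c := by
        rw [hx_def]
        simp only [if_neg (by omega : ¬ (i:ℕ) < 2), if_neg (by omega : ¬ (i:ℕ) = 2)]
      have hdeg : ∑ w, adjMat (modelA n 2 1) i w = (n:ℝ) - 2 := by
        have h := msum_ge3 hn3 hi3' (fun _ => (1:ℝ))
        simp only [mul_one] at h
        rw [h, Finset.sum_const, Finset.card_univ, Fintype.card_fin, nsmul_eq_mul, mul_one]
        ring
      rw [hdeg, msum_ge3 hn3 hi3' x, hSig, hxi, hx2]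
      linear_combination (-1 : ℝ) * hc

end modeleig

section iso
variable {n : ℕ}

lemma build_iso (hn : 8 ≤ n) (G : SimpleGraph (Fin n)) (v a b : Fin n)
    (hvab : v ≠ a ∧ v ≠ b ∧ a ≠ b)
    (hAdj_va : G.Adj v a) (hAdj_vb : G.Adj v b)
    (hNv : ∀ z, G.Adj v z → z = a ∨ z = b)
    (hoff : ∀ x y : Fin n, x ≠ y → x ≠ v → y ≠ v → G.Adj x y) :
    Nonempty (G ≃g modelA n 2 1) := by
  obtain ⟨hva, hvb, hab⟩ := hvab
  set i0 : Fin n := ⟨0, by omega⟩ with hi0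
  set i1 : Fin n := ⟨1, by omega⟩ with hi1
  set i2 : Fin n := ⟨2, by omega⟩ with hi2
  set σ1 := Equiv.swap a i0 with hσ1
  set σ2 := Equiv.swap (σ1 b) i1 with hσ2
  set σ3 := Equiv.swap (σ2 (σ1 v)) i2 with hσ3
  set σ := σ1.trans (σ2.trans σ3) with hσ
  have h01 : i0 ≠ i1 := by simp [hi0, hi1, Fin.ext_iff]
  have h02 : i0 ≠ i2 := by simp [hi0, hi2, Fin.ext_iff]
  have h12 : i1 ≠ i2 := by simp [hi1, hi2, Fin.ext_iff]
  have hσa : σ a = i0 := by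
    rw [hσ]
    simp only [Equiv.trans_apply]
    rw [hσ1, Equiv.swap_apply_left]
    have hb1 : σ1 b ≠ i0 := by
      rw [hσ1]
      intro h
      exact hab.symm (σ1.injective (h.trans (Equiv.swap_apply_left a i0).symm))
    rw [Equiv.swap_apply_of_ne_of_ne (Ne.symm (Ne.symm hb1)).symm h01] -- i0 ≠ σ1 b, i0 ≠ i1
    have hv1 : σ2 (σ1 v) ≠ i0 := by
      intro h
      have : σ1 v = σ1 a := by
        apply σ2.injective
        rw [h]
        rw [hσ1, Equiv.swap_apply_left]
        rw [Equiv.swap_apply_of_ne_of_ne (Ne.symm (Ne.symm hb1)).symm h01]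
      exact hva ((σ1.injective this) ▸ rfl)
    rw [Equiv.swap_apply_of_ne_of_ne (Ne.symm hv1) h02]
  have hσb : σ b = i1 := by
    rw [hσ]
    simp only [Equiv.trans_apply]
    rw [hσ2, Equiv.swap_apply_left]
    have hv1 : σ2 (σ1 v) ≠ i1 := by
      intro h
      have : σ1 v = σ1 b := by
        apply σ2.injective
        rw [h, hσ2, Equiv.swap_apply_left]
      exact hvb (σ1.injective this)
    rw [Equiv.swap_apply_of_ne_of_ne (Ne.symm hv1) h12]
  have hσv : σ v = i2 := by
    rw [hσ]
    simp only [Equiv.trans_apply]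
    rw [hσ3, Equiv.swap_apply_left]
  have hlt2 : ∀ z : Fin n, ((σ z : ℕ) < 2) ↔ (z = a ∨ z = b) := by
    intro z
    constructor
    · intro h
      have : σ z = i0 ∨ σ z = i1 := by
        rcases Nat.lt_or_ge (σ z : ℕ) 1 with h1 | h1
        · left; rw [Fin.ext_iff]; simp [hi0]; omega
        · right; rw [Fin.ext_iff]; simp [hi1]; omega
      rcases this with h' | h'
      · exact Or.inl (σ.injective (h'.trans hσa.symm))
      · exact Or.inr (σ.injective (h'.trans hσb.symm))
    · rintro (rfl | rfl)
      · rw [hσa]; simp [hi0]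
      · rw [hσb]; simp [hi1]
  have heq2 : ∀ z : Fin n, ((σ z : ℕ) = 2) ↔ z = v := by
    intro z
    constructor
    · intro h
      have : σ z = i2 := by rw [Fin.ext_iff]; simpa [hi2] using h
      exact σ.injective (this.trans hσv.symm)
    · rintro rfl
      rw [hσv]
  refine ⟨⟨σ, ?_⟩⟩
  intro x y
  show (modelA n 2 1).Adj (σ x) (σ y) ↔ G.Adj x y
  rw [modelA_adj]
  constructor
  · rintro ⟨hne, hcond⟩
    have hxy : x ≠ y := fun h => hne (h ▸ rfl)
    by_cases hxv : x = v
    · subst hxv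
      -- σ x has value 2 : so the condition forces (σ y) < 2
      have h2 : ((σ x : ℕ) = 2) := (heq2 x).2 rfl
      rcases hcond with h | h | h
      · omega
      · rcases (hlt2 y).1 h with rfl | rfl
        · exact hAdj_va
        · exact hAdj_vb
      · omega
    · by_cases hyv : y = v
      · subst hyv
        have h2 : ((σ y : ℕ) = 2) := (heq2 y).2 rfl
        rcases hcond with h | h | h
        · rcases (hlt2 x).1 h with rfl | rfl
          · exact hAdj_va.symm
          · exact hAdj_vb.symm
        · omega
        · omega
      · exact hoff x y hxy hxv hyv
  · intro hadj
    have hxy : x ≠ y := hadj.ne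
    have hne : σ x ≠ σ y := fun h => hxy (σ.injective h)
    refine ⟨hne, ?_⟩
    by_cases hxv : x = v
    · subst hxv
      rcases hNv y hadj with rfl | rfl
      · exact Or.inr (Or.inl ((hlt2 y).2 (Or.inl rfl)))
      · exact Or.inr (Or.inl ((hlt2 y).2 (Or.inr rfl)))
    · by_cases hyv : y = v
      · subst hyv
        rcases hNv x hadj.symm with rfl | rfl
        · exact Or.inl ((hlt2 x).2 (Or.inl rfl))
        · exact Or.inl ((hlt2 x).2 (Or.inr rfl))
      · -- neither is v
        by_cases hxab : x = a ∨ x = b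
        · exact Or.inl ((hlt2 x).2 hxab)
        by_cases hyab : y = a ∨ y = b
        · exact Or.inr (Or.inl ((hlt2 y).2 hyab))
        · refine Or.inr (Or.inr ⟨?_, ?_⟩)
          · have h1 : ¬ ((σ x : ℕ) < 2) := fun h => hxab ((hlt2 x).1 h)
            have h2 : ¬ ((σ x : ℕ) = 2) := fun h => hxv ((heq2 x).1 h)
            omega
          · have h1 : ¬ ((σ y : ℕ) < 2) := fun h => hyab ((hlt2 y).1 h)
            have h2 : ¬ ((σ y : ℕ) = 2) := fun h => hyv ((heq2 y).1 h)
            omega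

end iso

/-- Corollary: Let `G` be a graph of even order `n ≥ 7`.
If `q(G) ≥ q(K_2 ∨ (K_1 ∪ K_{n-3}))`, then `G` has a perfect matching containing any
given edge, unless `G ≅ K_2 ∨ (K_1 ∪ K_{n-3})`. -/
theorem stmt_5 (n : ℕ) (hn : 7 ≤ n) (hpar : n % 2 = 0)
    (G : SimpleGraph (Fin n))
    (hq : qRad (modelA n 2 1) ≤ qRad G) :
    Nonempty (G ≃g modelA n 2 1) ∨
      ∀ u v : Fin n, G.Adj u v →
        ∃ M : Finset (Sym2 (Fin n)),
          IsMatchingIn G M ∧ (∀ w : Fin n, ∃ e ∈ M, w ∈ e) ∧ s(u, v) ∈ M := by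
  have hn8 : 8 ≤ n := by omega
  have hnR : (8:ℝ) ≤ (n:ℝ) := by exact_mod_cast hn8
  have hn1 : (0:ℝ) < (n:ℝ) - 1 := by linarith
  have hthr0 : (0:ℝ) ≤ 2*(n:ℝ) - 4 + 2/((n:ℝ)-1) := by
    have : (0:ℝ) < 2/((n:ℝ)-1) := div_pos two_pos hn1
    linarith
  -- the model has an eigenvalue above the threshold
  obtain ⟨t0, ht0gt, x0, hx00, heig0⟩ := model_eig hn8
  have ht0le : t0 ≤ qRad (modelA n 2 1) := by
    apply le_csSup (qMat_eigs_bddAbove (modelA n 2 1))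
    exact ⟨x0, hx00, heig0⟩
  -- hence the complement of G has at most n - 3 edges
  have hmc : e2 G Finset.univ + 5 ≤ 2 * n := by
    by_contra hcon
    push_neg at hcon
    have hmc' : 2 * n ≤ e2 G Finset.univ + 4 := by omega
    have hle : qRad G ≤ 2*(n:ℝ) - 4 + 2/((n:ℝ)-1) := by
      apply Real.sSup_le _ hthr0
      rintro tg ⟨xg, hxg, heigg⟩
      exact eig_le_thr G hn8 hmc' hxg heigg
    have := hq
    unfold qRad maxEig at this hle ht0le
    linarith
  by_cases hC : ∃ (v a b : Fin n), G.Adj a b ∧ v ≠ a ∧ v ≠ b ∧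
      (∀ z, G.Adj v z → z = a ∨ z = b)
  · -- G is the model graph
    left
    obtain ⟨v, a, b, hab, hva, hvb, hNv⟩ := hC
    -- v is adjacent to both a and b
    have hAdj_va : G.Adj v a := by
      by_contra hcon
      have hsub : (Finset.univ.erase v).erase b ⊆ bd G Finset.univ v := by
        intro z hz
        have hzb : z ≠ b := (Finset.mem_erase.1 hz).1
        have hzv : z ≠ v := (Finset.mem_erase.1 (Finset.mem_erase.1 hz).2).1
        refine mem_bd.2 ⟨Finset.mem_univ _, hzv, fun hadj => ?_⟩
        rcases hNv z hadj with rfl | rfl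
        · exact hcon hadj
        · exact hzb rfl
      have hcard : n - 2 ≤ dN G Finset.univ v := by
        have h1 := Finset.card_le_card hsub
        rw [Finset.card_erase_of_mem (Finset.mem_erase.2 ⟨Ne.symm ?hbv, Finset.mem_univ b⟩),
          Finset.card_erase_of_mem (Finset.mem_univ v), Finset.card_univ,
          Fintype.card_fin] at h1
        · exact h1
        case hbv => exact hvb
      have := two_dN_le_e2 (G := G) (Finset.mem_univ v)
      omega
    have hAdj_vb : G.Adj v b := by
      by_contra hcon
      have hsub : (Finset.univ.erase v).erase a ⊆ bd G Finset.univ v := by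
        intro z hz
        have hza : z ≠ a := (Finset.mem_erase.1 hz).1
        have hzv : z ≠ v := (Finset.mem_erase.1 (Finset.mem_erase.1 hz).2).1
        refine mem_bd.2 ⟨Finset.mem_univ _, hzv, fun hadj => ?_⟩
        rcases hNv z hadj with rfl | rfl
        · exact hza rfl
        · exact hcon hadj
      have hcard : n - 2 ≤ dN G Finset.univ v := by
        have h1 := Finset.card_le_card hsub
        rw [Finset.card_erase_of_mem (Finset.mem_erase.2 ⟨Ne.symm hva, Finset.mem_univ a⟩),
          Finset.card_erase_of_mem (Finset.mem_univ v), Finset.card_univ,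
          Fintype.card_fin] at h1
        exact h1
      have := two_dN_le_e2 (G := G) (Finset.mem_univ v)
      omega
    -- all pairs away from v are adjacent
    have hoff : ∀ x y : Fin n, x ≠ y → x ≠ v → y ≠ v → G.Adj x y := by
      intro x y hxy hxv hyv
      by_contra hcon
      -- v has n-3 non-neighbours, plus the pair (x,y),(y,x)
      have hdv : n - 3 ≤ dN G Finset.univ v := by
        have hsub : ((Finset.univ.erase v).erase a).erase b ⊆ bd G Finset.univ v := by
          intro z hz
          have hzb : z ≠ b := (Finset.mem_erase.1 hz).1
          have hza : z ≠ a := (Finset.mem_erase.1 (Finset.mem_erase.1 hz).2).1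
          have hzv : z ≠ v :=
            (Finset.mem_erase.1 (Finset.mem_erase.1 (Finset.mem_erase.1 hz).2).2).1
          refine mem_bd.2 ⟨Finset.mem_univ _, hzv, fun hadj => ?_⟩
          rcases hNv z hadj with rfl | rfl
          · exact hza rfl
          · exact hzb rfl
        have h1 := Finset.card_le_card hsub
        rw [Finset.card_erase_of_mem, Finset.card_erase_of_mem, Finset.card_erase_of_mem
            (Finset.mem_univ v), Finset.card_univ, Fintype.card_fin] at h1
        · unfold dN
          omega
        · exact Finset.mem_erase.2 ⟨Ne.symm hva, Finset.mem_univ a⟩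
        · exact Finset.mem_erase.2 ⟨hab.ne', Finset.mem_erase.2 ⟨Ne.symm hvb, Finset.mem_univ b⟩⟩
      have hbig : 2 * (dN G Finset.univ v) + 2 ≤ e2 G Finset.univ := by
        have hsub2 : insert ((x, y) : Fin n × Fin n) (insert ((y, x) : Fin n × Fin n)
            (pva G Finset.univ v)) ⊆ bp G Finset.univ := by
          intro p hp
          rcases Finset.mem_insert.1 hp with rfl | hp'
          · exact mem_bp.2 ⟨Finset.mem_univ _, Finset.mem_univ _, hxy, hcon⟩
          rcases Finset.mem_insert.1 hp' with rfl | hp''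
          · exact mem_bp.2 ⟨Finset.mem_univ _, Finset.mem_univ _, Ne.symm hxy,
              fun h => hcon h.symm⟩
          · exact pva_subset (Finset.mem_univ v) hp''
        have hxy_notmem : ((x, y) : Fin n × Fin n) ∉ insert ((y, x) : Fin n × Fin n)
            (pva G Finset.univ v) := by
          intro h
          rcases Finset.mem_insert.1 h with h' | h'
          · injection h' with h1 h2
            exact hxy h1
          · rcases pva_coord h' with h'' | h''
            · exact hxv h''
            · exact hyv h''
        have hyx_notmem : ((y, x) : Fin n × Fin n) ∉ pva G Finset.univ v := by
          intro h'
          rcases pva_coord h' with h'' | h''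
          · exact hyv h''
          · exact hxv h''
        have := Finset.card_le_card hsub2
        rw [Finset.card_insert_of_notMem hxy_notmem,
          Finset.card_insert_of_notMem hyx_notmem, pva_card] at this
        unfold e2
        omega
      omega
    exact build_iso hn8 G v a b ⟨hva, hvb, hab.ne⟩ hAdj_va hAdj_vb hNv hoff
  · -- every edge extends to a perfect matching
    right
    intro u v huv
    have huvne : u ≠ v := huv.ne
    push_neg at hC
    set s : Finset (Fin n) := (Finset.univ.erase u).erase v with hs
    have hscard : s.card = n - 2 := by
      rw [hs, Finset.card_erase_of_mem (Finset.mem_erase.2 ⟨Ne.symm huvne, Finset.mem_univ v⟩),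
        Finset.card_erase_of_mem (Finset.mem_univ u), Finset.card_univ, Fintype.card_fin]
      omega
    have hsmem : ∀ w ∈ s, w ≠ u ∧ w ≠ v := by
      intro w hw
      rw [hs, Finset.mem_erase, Finset.mem_erase] at hw
      exact ⟨hw.2.1, hw.1⟩
    -- every vertex of s has a neighbour inside s
    have hrich : ∀ w ∈ s, ∃ z ∈ s, z ≠ w ∧ G.Adj w z := by
      intro w hw
      obtain ⟨hwu, hwv⟩ := hsmem w hw
      obtain ⟨z, hz1, hz4, hz5⟩ := hC w u v huv hwu hwv
      refine ⟨z, ?_, hz1.ne', hz1⟩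
      rw [hs, Finset.mem_erase, Finset.mem_erase]
      exact ⟨hz5, hz4, Finset.mem_univ _⟩
    obtain ⟨M, hM1, hM2, hM3, hM4⟩ := matching_exists G (n - 2) s hscard (by omega) (by omega)
      (fun h => absurd h (by omega))
      (by
        intro h6
        constructor
        · have := e2_mono (G := G) (Finset.subset_univ s)
          omega
        · intro w hw
          obtain ⟨z, hzs, hzw, hadj⟩ := hrich w hw
          have hzAu : z ∈ Au G s w := mem_Au.2 ⟨hzs, hzw, hadj⟩
          have hAune : 1 ≤ (Au G s w).card := Finset.card_pos.2 ⟨z, hzAu⟩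
          have := card_erase_split (G := G) hw
          omega)
    refine ⟨insert (s(u, v)) M, ⟨?_, ?_⟩, ?_, Finset.mem_insert_self _ _⟩
    · -- edges of the matching are edges of G
      intro e he
      rw [Finset.mem_coe] at he
      rcases Finset.mem_insert.1 he with rfl | he'
      · exact huv
      · obtain ⟨xx, yy, _, _, hadj, rfl⟩ := hM1 e he'
        exact hadj
    · -- pairwise disjoint
      intro e he f hf hef w hw
      have key : ∀ g, g ∈ M → ∀ z : Fin n, z ∈ s(u, v) → z ∈ g → False := by
        intro g hg z hz hzg
        have hzs := hM4 g hg z hzg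
        obtain ⟨hzu, hzv⟩ := hsmem z hzs
        rw [Sym2.mem_iff] at hz
        rcases hz with rfl | rfl
        · exact hzu rfl
        · exact hzv rfl
      rcases Finset.mem_insert.1 he with rfl | he' <;> rcases Finset.mem_insert.1 hf with rfl | hf'
      · exact hef rfl
      · exact key f hf' w hw.1 hw.2
      · exact key e he' w hw.2 hw.1
      · exact hM2 e he' f hf' hef w hw
    · -- covers every vertex
      intro w
      by_cases h1 : w = u
      · exact ⟨s(u, v), Finset.mem_insert_self _ _, by rw [h1]; simp⟩
      by_cases h2 : w = v
      · exact ⟨s(u, v), Finset.mem_insert_self _ _, by rw [h2]; simp⟩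
      · have hws : w ∈ s := by
          rw [hs, Finset.mem_erase, Finset.mem_erase]
          exact ⟨h2, h1, Finset.mem_univ _⟩
        obtain ⟨e, he, hwe⟩ := hM3 w hws
        exact ⟨e, Finset.mem_insert_of_mem he, hwe⟩
end

section
/- Let $n, s, k$ be positive integers with $k \ge 2$, $s \ge 2$, $n \ge k + 7$ and $n \ge (k+1)s - 2k + 2$. If $s > 2$, then the spectral radius of the graph $K_s \vee ((ks-2k+2)K_1 \cup K_{n-(k+1)s+2k-2})$ is at most the spectral radius of the graph $K_2 \vee (2K_1 \cup K_{n-4})$ (the $s=2$ member of this family). -/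
section AuxSpectral

lemma adjMat_nonneg' {V : Type} [Fintype V] (G : SimpleGraph V) (i j : V) :
    0 ≤ adjMat G i j := by
  unfold adjMat; split <;> norm_num

lemma adjMat_le_one' {V : Type} [Fintype V] (G : SimpleGraph V) (i j : V) :
    adjMat G i j ≤ 1 := by
  unfold adjMat; split <;> norm_num

lemma eig_bound {n : ℕ} (M : Matrix (Fin n) (Fin n) ℝ) (hM : ∀ i j, 0 ≤ M i j)
    (y : Fin n → ℝ) (hy : ∀ i, 0 < y i) (t : ℝ)
    (hrow : ∀ i, M.mulVec y i ≤ t * y i) :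
    ∀ u ∈ {t : ℝ | ∃ x : Fin n → ℝ, x ≠ 0 ∧ M.mulVec x = t • x}, u ≤ t := by
  rintro u ⟨x, hx, hxe⟩
  obtain ⟨j0, hj0⟩ : ∃ j, x j ≠ 0 := Function.ne_iff.mp hx
  have hne : (Finset.univ : Finset (Fin n)).Nonempty := ⟨j0, Finset.mem_univ _⟩
  obtain ⟨i0, -, hmax⟩ := Finset.exists_max_image Finset.univ (fun i => |x i| / y i) hne
  set c := |x i0| / y i0 with hc
  have hcpos : 0 < c := by
    have : 0 < |x j0| / y j0 := div_pos (abs_pos.mpr hj0) (hy j0)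
    linarith [hmax j0 (Finset.mem_univ _)]
  have hxle : ∀ j, |x j| ≤ c * y j := by
    intro j
    have := hmax j (Finset.mem_univ _)
    calc |x j| = (|x j| / y j) * y j := by rw [div_mul_cancel₀]; exact ne_of_gt (hy j)
    _ ≤ c * y j := by apply mul_le_mul_of_nonneg_right this (le_of_lt (hy j))
  have hxi0 : |x i0| = c * y i0 := by rw [hc, div_mul_cancel₀]; exact ne_of_gt (hy i0)
  have key : |u| * |x i0| ≤ t * |x i0| := by
    have h1 : u * x i0 = M.mulVec x i0 := by
      rw [hxe]; rfl
    calc |u| * |x i0| = |u * x i0| := (abs_mul u (x i0)).symm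
    _ = |M.mulVec x i0| := by rw [h1]
    _ = |∑ j, M i0 j * x j| := rfl
    _ ≤ ∑ j, |M i0 j * x j| := Finset.abs_sum_le_sum_abs _ _
    _ = ∑ j, M i0 j * |x j| := by
        refine Finset.sum_congr rfl fun j _ => ?_
        rw [abs_mul, abs_of_nonneg (hM i0 j)]
    _ ≤ ∑ j, M i0 j * (c * y j) := by
        refine Finset.sum_le_sum fun j _ => mul_le_mul_of_nonneg_left (hxle j) (hM i0 j)
    _ = c * M.mulVec y i0 := by
        simp only [Matrix.mulVec, dotProduct, Finset.mul_sum]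
        exact Finset.sum_congr rfl fun j _ => by ring
    _ ≤ c * (t * y i0) := mul_le_mul_of_nonneg_left (hrow i0) (le_of_lt hcpos)
    _ = t * (c * y i0) := by ring
    _ = t * |x i0| := by rw [hxi0]
  have hxi0pos : 0 < |x i0| := by rw [hxi0]; exact mul_pos hcpos (hy i0)
  have : |u| ≤ t := le_of_mul_le_mul_right (by linarith [key]) hxi0pos
  exact le_trans (le_abs_self u) this

lemma specRad_le' {n : ℕ} (G : SimpleGraph (Fin n)) (y : Fin n → ℝ) (hy : ∀ i, 0 < y i)
    (t : ℝ) (ht : 0 ≤ t) (hrow : ∀ i, (adjMat G).mulVec y i ≤ t * y i) :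
    specRad G ≤ t :=
  Real.sSup_le (eig_bound _ (adjMat_nonneg' G) y hy t hrow) ht

lemma le_specRad' {n : ℕ} (G : SimpleGraph (Fin n)) (t : ℝ) (x : Fin n → ℝ)
    (hx : x ≠ 0) (he : (adjMat G).mulVec x = t • x) : t ≤ specRad G := by
  apply le_csSup
  · refine ⟨n, fun u hu => ?_⟩
    refine eig_bound _ (adjMat_nonneg' G) (fun _ => 1) (fun _ => one_pos) n ?_ u hu
    intro i
    simp only [Matrix.mulVec, dotProduct, mul_one]
    calc ∑ j, adjMat G i j ≤ ∑ _j : Fin n, (1:ℝ) :=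
          Finset.sum_le_sum fun j _ => adjMat_le_one' G i j
    _ = n := by simp
  · exact ⟨x, hx, he⟩

noncomputable def zvec (n s a : ℕ) (p q r : ℝ) : Fin n → ℝ :=
  fun j => if (j : ℕ) < s then p else if (j : ℕ) < s + a then q else r

lemma sum_ind_lt (n s : ℕ) (hs : s ≤ n) (p : ℝ) :
    ∑ j : Fin n, (if (j : ℕ) < s then p else 0) = s * p := by
  rw [Fin.sum_univ_eq_sum_range (fun m => if m < s then p else 0)]
  rw [← Finset.sum_filter]
  have : (Finset.range n).filter (fun m => m < s) = Finset.range s := by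
    ext m; simp [Finset.mem_filter, Finset.mem_range]; omega
  rw [this, Finset.sum_const, Finset.card_range, nsmul_eq_mul]

lemma sum_ind_ge (n m : ℕ) (hm : m ≤ n) (r : ℝ) :
    ∑ j : Fin n, (if m ≤ (j : ℕ) then r else 0) = (n - m : ℕ) * r := by
  clear hm
  rw [Fin.sum_univ_eq_sum_range (fun j => if m ≤ j then r else 0)]
  rw [← Finset.sum_filter]
  have : (Finset.range n).filter (fun j => m ≤ j) = Finset.Ico m n := by
    ext j; simp [Finset.mem_filter, Finset.mem_range, Finset.mem_Ico]; omega
  rw [this, Finset.sum_const, Nat.card_Ico, nsmul_eq_mul]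

lemma sum_ind_band (n s a : ℕ) (h : s + a ≤ n) (q : ℝ) :
    ∑ j : Fin n, (if s ≤ (j : ℕ) ∧ (j : ℕ) < s + a then q else 0) = a * q := by
  rw [Fin.sum_univ_eq_sum_range (fun j => if s ≤ j ∧ j < s + a then q else 0)]
  rw [← Finset.sum_filter]
  have : (Finset.range n).filter (fun j => s ≤ j ∧ j < s + a) = Finset.Ico s (s+a) := by
    ext j; simp [Finset.mem_filter, Finset.mem_range, Finset.mem_Ico]; omega
  rw [this, Finset.sum_const, Nat.card_Ico, nsmul_eq_mul]
  have : s + a - s = a := by omega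
  rw [this]

lemma sum_zvec (n s a : ℕ) (h : s + a ≤ n) (p q r : ℝ) :
    ∑ j : Fin n, zvec n s a p q r j = s * p + a * q + ((n - s - a : ℕ) : ℝ) * r := by
  have hz : ∀ j : Fin n, zvec n s a p q r j =
      (if (j : ℕ) < s then p else 0) + (if s ≤ (j : ℕ) ∧ (j : ℕ) < s + a then q else 0)
        + (if s + a ≤ (j : ℕ) then r else 0) := by
    intro j; unfold zvec
    rcases Nat.lt_or_ge (j : ℕ) s with h1 | h1
    · rw [if_pos h1, if_pos h1, if_neg (by omega : ¬ (s ≤ (j:ℕ) ∧ (j:ℕ) < s + a)),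
        if_neg (by omega : ¬ s + a ≤ (j:ℕ))]
      ring
    · rcases Nat.lt_or_ge (j : ℕ) (s+a) with h2 | h2
      · rw [if_neg (by omega : ¬ (j:ℕ) < s), if_pos h2, if_neg (by omega : ¬ (j:ℕ) < s),
          if_pos ⟨h1, h2⟩, if_neg (by omega : ¬ s + a ≤ (j:ℕ))]
        ring
      · rw [if_neg (by omega : ¬ (j:ℕ) < s), if_neg (by omega : ¬ (j:ℕ) < s + a),
          if_neg (by omega : ¬ (j:ℕ) < s), if_neg (by omega : ¬ (s ≤ (j:ℕ) ∧ (j:ℕ) < s + a)),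
          if_pos h2]
        ring
  rw [Finset.sum_congr rfl (fun j _ => hz j), Finset.sum_add_distrib, Finset.sum_add_distrib,
    sum_ind_lt n s (by omega) p, sum_ind_band n s a h q, sum_ind_ge n (s+a) h r]
  have : n - (s + a) = n - s - a := by omega
  rw [this]

lemma mulVec_modelA (n s a : ℕ) (hn : s + a ≤ n) (p q r : ℝ) (i : Fin n) :
    (adjMat (modelA n s a)).mulVec (zvec n s a p q r) i =
      if (i : ℕ) < s then (s * p + a * q + ((n - s - a : ℕ) : ℝ) * r) - p
      else if (i : ℕ) < s + a then s * p
      else s * p + ((n - s - a : ℕ) : ℝ) * r - r := by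
  classical
  have hterm : ∀ j : Fin n, (adjMat (modelA n s a)) i j * zvec n s a p q r j
      = if (modelA n s a).Adj i j then zvec n s a p q r j else 0 := by
    intro j
    by_cases h : (modelA n s a).Adj i j <;> simp [adjMat, h]
  rw [show (adjMat (modelA n s a)).mulVec (zvec n s a p q r) i
      = ∑ j, (adjMat (modelA n s a)) i j * zvec n s a p q r j from rfl]
  rw [Finset.sum_congr rfl (fun j _ => hterm j)]
  rcases Nat.lt_or_ge (i : ℕ) s with h1 | h1
  · rw [if_pos h1]
    have hpt : ∀ j : Fin n, (if (modelA n s a).Adj i j then zvec n s a p q r j else 0)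
        = zvec n s a p q r j - (if j = i then zvec n s a p q r j else 0) := by
      intro j
      by_cases hji : j = i
      · rw [if_pos hji, hji, if_neg (SimpleGraph.irrefl _)]
        ring
      · have hadj : (modelA n s a).Adj i j := ⟨fun h => hji h.symm, Or.inl h1⟩
        rw [if_pos hadj, if_neg hji]
        ring
    rw [Finset.sum_congr rfl (fun j _ => hpt j), Finset.sum_sub_distrib,
      Finset.sum_ite_eq' Finset.univ i (fun j => zvec n s a p q r j)]
    rw [if_pos (Finset.mem_univ i), sum_zvec n s a hn p q r]
    have : zvec n s a p q r i = p := by unfold zvec; rw [if_pos h1]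
    rw [this]
  · rcases Nat.lt_or_ge (i : ℕ) (s + a) with h2 | h2
    · rw [if_neg (by omega : ¬ (i:ℕ) < s), if_pos h2]
      have hpt : ∀ j : Fin n, (if (modelA n s a).Adj i j then zvec n s a p q r j else 0)
          = (if (j : ℕ) < s then p else 0) := by
        intro j
        by_cases hjs : (j : ℕ) < s
        · have hne : i ≠ j := by intro h; rw [h] at h1; omega
          have hadj : (modelA n s a).Adj i j := ⟨hne, Or.inr (Or.inl hjs)⟩
          rw [if_pos hadj, if_pos hjs]
          unfold zvec; rw [if_pos hjs]
        · have hnadj : ¬ (modelA n s a).Adj i j := by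
            rintro ⟨hne, hc | hc | ⟨hc1, hc2⟩⟩ <;> omega
          rw [if_neg hnadj, if_neg hjs]
      rw [Finset.sum_congr rfl (fun j _ => hpt j), sum_ind_lt n s (by omega) p]
    · rw [if_neg (by omega : ¬ (i:ℕ) < s), if_neg (by omega : ¬ (i:ℕ) < s + a)]
      have hpt : ∀ j : Fin n, (if (modelA n s a).Adj i j then zvec n s a p q r j else 0)
          = (if (j : ℕ) < s then p else 0) + (if s + a ≤ (j : ℕ) then r else 0)
            - (if j = i then r else 0) := by
        intro j
        by_cases hji : j = i
        · rw [if_pos hji, hji, if_neg (SimpleGraph.irrefl _),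
            if_neg (by omega : ¬ (i:ℕ) < s), if_pos (by omega : s + a ≤ (i:ℕ))]
          ring
        · by_cases hjs : (j : ℕ) < s
          · have hadj : (modelA n s a).Adj i j := ⟨fun h => hji h.symm, Or.inr (Or.inl hjs)⟩
            rw [if_pos hadj, if_pos hjs, if_neg (by omega : ¬ s + a ≤ (j:ℕ)), if_neg hji]
            unfold zvec; rw [if_pos hjs]; ring
          · by_cases hja : s + a ≤ (j : ℕ)
            · have hadj : (modelA n s a).Adj i j :=
                ⟨fun h => hji h.symm, Or.inr (Or.inr ⟨h2, hja⟩)⟩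
              rw [if_pos hadj, if_neg hjs, if_pos hja, if_neg hji]
              unfold zvec
              rw [if_neg hjs, if_neg (by omega : ¬ (j:ℕ) < s + a)]
              ring
            · have hnadj : ¬ (modelA n s a).Adj i j := by
                rintro ⟨hne, hc | hc | ⟨hc1, hc2⟩⟩ <;> omega
              rw [if_neg hnadj, if_neg hjs, if_neg hja, if_neg hji]
              ring
      rw [Finset.sum_congr rfl (fun j _ => hpt j), Finset.sum_sub_distrib,
        Finset.sum_add_distrib, sum_ind_lt n s (by omega) p, sum_ind_ge n (s+a) hn r,
        Finset.sum_ite_eq' Finset.univ i (fun _ => r)]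
      rw [if_pos (Finset.mem_univ i)]
      have : n - (s + a) = n - s - a := by omega
      rw [this]

lemma key_int (k s n a : ℤ) (hk : 2 ≤ k) (hs : 3 ≤ s) (ha : a = k*(s-2)+2)
    (h1 : k+7 ≤ n) (h2 : s + a ≤ n) :
    a*s*(s+a-2) ≤ (a-2)*(n-2)*(n-3) := by
  rcases eq_or_lt_of_le hs with h3 | h4
  · subst ha
    rw [← h3]
    nlinarith [mul_le_mul (by linarith : (k+5:ℤ) ≤ n-2) (by linarith : (k+4:ℤ) ≤ n-3)
      (by linarith) (by linarith), sq_nonneg k, sq_nonneg (k-2)]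
  · have h4' : 4 ≤ s := h4
    have ha2 : a - 2 = k*(s-2) := by omega
    have hfac : 2*s ≤ (a-2)*(a-3) := by
      nlinarith [mul_le_mul (by nlinarith : (s:ℤ) ≤ k*(s-2))
        (by nlinarith : (3:ℤ) ≤ k*(s-2)-1) (by linarith) (by nlinarith)]
    have hmono : (s+a-2)*(s+a-3) ≤ (n-2)*(n-3) :=
      mul_le_mul (by linarith) (by linarith) (by nlinarith) (by linarith)
    nlinarith [mul_le_mul_of_nonneg_left hmono (by nlinarith : (0:ℤ) ≤ a-2),
      mul_le_mul_of_nonneg_left hfac (by nlinarith : (0:ℤ) ≤ s+a-2)]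

lemma row1_ineq (S A N : ℝ) (hS : 3 ≤ S) (hN : 9 ≤ N)
    (hkey : A*S*(S+A-2) ≤ (A-2)*(N-2)*(N-3)) :
    (S*((S+A-2)/S) + A*((S+A-2)/(N-3)) + (N-S-A)*1) - (S+A-2)/S
      ≤ (N-3)*((S+A-2)/S) := by
  have hS0 : (0:ℝ) < S := by linarith
  have hN3 : (0:ℝ) < N - 3 := by linarith
  have expand : (N-3)*((S+A-2)/S)
      - ((S*((S+A-2)/S) + A*((S+A-2)/(N-3)) + (N-S-A)*1) - (S+A-2)/S)
      = ((A-2)*(N-2)*(N-3) - A*S*(S+A-2)) / (S*(N-3)) := by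
    field_simp
    ring
  have hnum : 0 ≤ ((A-2)*(N-2)*(N-3) - A*S*(S+A-2)) / (S*(N-3)) :=
    div_nonneg (by linarith) (le_of_lt (mul_pos hS0 hN3))
  linarith

end AuxSpectral

/-- Lemma: for `k ≥ 2`, `n ≥ k + 7`, `n ≥ (k+1)s - 2k + 2` and `s > 2`,
`ρ(K_s ∨ ((ks-2k+2)K_1 ∪ K_{n-(k+1)s+2k-2})) ≤ ρ(K_2 ∨ (2K_1 ∪ K_{n-4}))`. -/
theorem stmt_12 (n s k : ℕ) (hk : 2 ≤ k) (hs : 2 ≤ s)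
    (h1 : k + 7 ≤ n) (h2 : (k + 1) * s + 2 ≤ n + 2 * k) (hs2 : 2 < s) :
    specRad (modelA n s (k * s - 2 * k + 2)) ≤ specRad (modelA n 2 2) := by
  set a := k * s - 2 * k + 2 with hadef
  have hs3 : 3 ≤ s := hs2
  have hks : 2 * k ≤ k * s := by
    calc 2*k = k*2 := by ring
    _ ≤ k*s := Nat.mul_le_mul_left k hs
  have h3k : k * 3 ≤ k * s := Nat.mul_le_mul_left k hs3
  have hn9 : 9 ≤ n := by omega
  -- integer versions
  have haz : (a:ℤ) = (k:ℤ)*(s:ℤ) - 2*(k:ℤ) + 2 := by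
    rw [hadef]
    push_cast [Nat.cast_sub hks]
    ring
  have ha4 : 4 ≤ a := by
    have : (4:ℤ) ≤ (a:ℤ) := by
      rw [haz]
      have : (k:ℤ)*3 ≤ (k:ℤ)*(s:ℤ) := by exact_mod_cast h3k
      have hk' : (2:ℤ) ≤ (k:ℤ) := by exact_mod_cast hk
      linarith
    exact_mod_cast this
  have h2z : ((k:ℤ)+1)*(s:ℤ) + 2 ≤ (n:ℤ) + 2*(k:ℤ) := by exact_mod_cast h2
  have hsaz : (s:ℤ) + (a:ℤ) ≤ (n:ℤ) := by rw [haz]; linarith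
  have hsa : s + a ≤ n := by exact_mod_cast hsaz
  have hkeyz := key_int (k:ℤ) (s:ℤ) (n:ℤ) (a:ℤ) (by exact_mod_cast hk)
    (by exact_mod_cast hs3) (by rw [haz]; ring) (by exact_mod_cast h1) hsaz
  -- real versions
  have hsR : (3:ℝ) ≤ (s:ℝ) := by exact_mod_cast hs3
  have haR : (4:ℝ) ≤ (a:ℝ) := by exact_mod_cast ha4
  have hnR : (9:ℝ) ≤ (n:ℝ) := by exact_mod_cast hn9
  have hsaR : (s:ℝ) + (a:ℝ) ≤ (n:ℝ) := by exact_mod_cast hsaz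
  have hkeyR : (a:ℝ)*(s:ℝ)*((s:ℝ)+(a:ℝ)-2) ≤ ((a:ℝ)-2)*((n:ℝ)-2)*((n:ℝ)-3) := by
    exact_mod_cast hkeyz
  have hcC : ((n - s - a : ℕ) : ℝ) = (n:ℝ) - (s:ℝ) - (a:ℝ) := by
    rw [Nat.cast_sub (by omega), Nat.cast_sub (by omega)]
  -- Upper bound: specRad (modelA n s a) ≤ n - 3
  have hUB : specRad (modelA n s a) ≤ (n:ℝ) - 3 := by
    apply specRad_le' (modelA n s a)
      (zvec n s a (((s:ℝ)+(a:ℝ)-2)/(s:ℝ)) (((s:ℝ)+(a:ℝ)-2)/((n:ℝ)-3)) 1)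
    · intro i
      unfold zvec
      split_ifs
      · exact div_pos (by linarith) (by linarith)
      · exact div_pos (by linarith) (by linarith)
      · exact one_pos
    · linarith
    · intro i
      rw [mulVec_modelA n s a hsa, hcC]
      unfold zvec
      split_ifs with hi1 hi2
      · exact row1_ineq (s:ℝ) (a:ℝ) (n:ℝ) hsR hnR hkeyR
      · rw [mul_div_cancel₀ _ (by linarith : (s:ℝ) ≠ 0),
          mul_div_cancel₀ _ (by linarith : (n:ℝ)-3 ≠ 0)]
      · rw [mul_div_cancel₀ _ (by linarith : (s:ℝ) ≠ 0)]
        linarith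
  -- Lower bound: n - 3 ≤ specRad (modelA n 2 2)
  have hLB : (n:ℝ) - 3 ≤ specRad (modelA n 2 2) := by
    set N := (n:ℝ) with hN
    have hN9 : 9 ≤ N := hnR
    set g : ℝ → ℝ := fun t => t*(1-t)*(t-(N-5)) + 4*(t-(N-5)) + 2*t*(N-4) with hg
    have hcont : ContinuousOn g (Set.Icc (N-3) (N-2)) := by
      apply Continuous.continuousOn; fun_prop
    have hsub := intermediate_value_Icc' (by linarith : N-3 ≤ N-2) hcont
    have hg1 : g (N-3) = 8 := by simp only [hg]; ring
    have hg2 : g (N-2) = 12 - (N-2)*(N-1) := by simp only [hg]; ring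
    have hmem : (0:ℝ) ∈ Set.Icc (g (N-2)) (g (N-3)) := by
      constructor
      · rw [hg2]; nlinarith
      · rw [hg1]; norm_num
    obtain ⟨t0, ht0mem, hgt0⟩ := hsub hmem
    have ht0lo : N - 3 ≤ t0 := ht0mem.1
    have ht0 : t0 ≠ 0 := by intro h; rw [h] at ht0lo; linarith
    set p : ℝ := (t0 - (N-5))/2 with hp
    set q : ℝ := 2*p/t0 with hq
    have hc4 : ((n - 2 - 2 : ℕ) : ℝ) = N - 4 := by
      rw [Nat.cast_sub (by omega), Nat.cast_sub (by omega)]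
      push_cast
      ring
    have he : (adjMat (modelA n 2 2)).mulVec (zvec n 2 2 p q 1)
        = t0 • (zvec n 2 2 p q 1) := by
      funext i
      rw [Pi.smul_apply, smul_eq_mul, mulVec_modelA n 2 2 (by omega), hc4]
      unfold zvec
      push_cast
      split_ifs with hi1 hi2
      · rw [hq, hp]
        have hgt0' : g t0 = 0 := hgt0
        simp only [hg] at hgt0'
        field_simp
        ring_nf
        ring_nf at hgt0'
        linarith
      · rw [hq, mul_comm t0, div_mul_cancel₀ _ ht0]
      · rw [hp]; ring
    have hx : zvec n 2 2 p q 1 ≠ 0 := by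
      apply Function.ne_iff.mpr
      refine ⟨⟨4, by omega⟩, ?_⟩
      unfold zvec
      norm_num
    have := le_specRad' (modelA n 2 2) t0 _ hx he
    linarith
  linarith
end
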